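/- arXiv:1303.5869 — 3 statements merged into one kernel-verified Lean document; each statement's English description precedes it below -/
import Mathlib

section
/- Assume ν ≥ q+1. Then for every z ∈ ℝ the rank of 𝓝(z) equals q·min{μ,r} and the kernel of 𝓝(z) has dimension νr − q·min{μ,r} > 0; in particular 𝓝(z) never has full column rank. -/
open Matrix Kronecker

noncomputable section

/-- The `k × k` shift matrix with `(i,j)` entry `δ_{i+1,j}`. -/
def Sh (k : ℕ) : Matrix (Fin k) (Fin k) ℝ :=
  Matrix.of fun i j => if (i : ℕ) + 1 = (j : ℕ) then 1 else 0

/-- The matrix `A^k(z) ∈ ℝ^{q×r}`, with entries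
`k!/(i!·j!·(k−i−j)!)·z^{k−i−j} = C(k,i)·C(k−i,j)·z^{k−i−j}` for `i+j ≤ k`, else `0`. -/
def Amat (q r k : ℕ) (z : ℝ) : Matrix (Fin q) (Fin r) ℝ :=
  Matrix.of fun i j =>
    if (i : ℕ) + (j : ℕ) ≤ k then
      (Nat.choose k i : ℝ) * (Nat.choose (k - i) j : ℝ) * z ^ (k - i - j)
    else 0

/-- The block matrix `𝒜(z) ∈ ℝ^{μq×νr}` with `(i,j)` block `A^{i+j}(z)`. -/
def Acal (q r μ ν : ℕ) (z : ℝ) : Matrix (Fin μ × Fin q) (Fin ν × Fin r) ℝ :=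
  Matrix.of fun p p' => Amat q r ((p.1 : ℕ) + (p'.1 : ℕ)) z p.2 p'.2

/-- `A^0 = e₀ f₀ᵀ ∈ ℝ^{q×r}`. -/
def A0 (q r : ℕ) : Matrix (Fin q) (Fin r) ℝ :=
  Matrix.of fun a b => if (a : ℕ) = 0 ∧ (b : ℕ) = 0 then 1 else 0

/-- The block matrix `Ā ∈ ℝ^{μq×νr}` with `(i,j)` block `(S_qᵀ)^j · A^0 · S_r^i`. -/
def Abar (q r μ ν : ℕ) : Matrix (Fin μ × Fin q) (Fin ν × Fin r) ℝ :=
  Matrix.of fun p p' =>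
    (((Sh q)ᵀ) ^ (p'.1 : ℕ) * A0 q r * (Sh r) ^ (p.1 : ℕ)) p.2 p'.2

/-- `J_k(z) = z·I_k + S_kᵀ`. -/
def Jmat (k : ℕ) (z : ℝ) : Matrix (Fin k) (Fin k) ℝ := z • 1 + (Sh k)ᵀ

/-- The block lower-triangular matrix `𝓛_{m,k}(z)` with `(i,j)` block `C(i,j)·J_k(z)^{i−j}`
for `i ≥ j` and `0` otherwise. -/
def Lmat (m k : ℕ) (z : ℝ) : Matrix (Fin m × Fin k) (Fin m × Fin k) ℝ :=
  Matrix.of fun p p' =>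
    if (p'.1 : ℕ) ≤ (p.1 : ℕ) then
      (Nat.choose p.1 p'.1 : ℝ) * ((Jmat k z) ^ ((p.1 : ℕ) - (p'.1 : ℕ))) p.2 p'.2
    else 0

/-- Natural (block row-major) identification of `Fin (m*n)` with `Fin m × Fin n`. -/
def bIdx (m n : ℕ) : Fin (m * n) → Fin m × Fin n := fun x => finProdFinEquiv.symm x

/-- `M^{(n)}(z) ∈ ℝ^{q×r}`, the `n`-th derivative of `M(z) = u(z)w(z)`,
whose `(a,b)` entry is the `n`-th derivative of `z^{a+b}`. -/
def Md (q r n : ℕ) (z : ℝ) : Matrix (Fin q) (Fin r) ℝ :=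
  Matrix.of fun a b => iteratedDeriv n (fun t : ℝ => t ^ ((a : ℕ) + (b : ℕ))) z

/-- The block matrix `𝓜(z) ∈ ℝ^{μq×νr}` with `(i,j)` block `M^{(i+j)}(z)`. -/
def Mcal (q r μ ν : ℕ) (z : ℝ) : Matrix (Fin μ × Fin q) (Fin ν × Fin r) ℝ :=
  Matrix.of fun p p' => Md q r ((p.1 : ℕ) + (p'.1 : ℕ)) z p.2 p'.2

/-- The block matrix `𝓝(z) ∈ ℝ^{μq×νr}` with `(i,j)` block `M^{(i+j)}(z)/(i!·j!)`. -/
def Ncal (q r μ ν : ℕ) (z : ℝ) : Matrix (Fin μ × Fin q) (Fin ν × Fin r) ℝ :=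
  Matrix.of fun p p' =>
    Md q r ((p.1 : ℕ) + (p'.1 : ℕ)) z p.2 p'.2 /
      ((Nat.factorial (p.1 : ℕ) : ℝ) * (Nat.factorial (p'.1 : ℕ) : ℝ))

/-- `𝓝^0(z) = (M(z)/0!, …, M^{(ν−1)}(z)/(ν−1)!) ∈ ℝ^{q×νr}`. -/
def Ncal0 (q r ν : ℕ) (z : ℝ) : Matrix (Fin q) (Fin ν × Fin r) ℝ :=
  Matrix.of fun a p => Md q r (p.1 : ℕ) z a p.2 / (Nat.factorial (p.1 : ℕ) : ℝ)

/-- `𝓜^0(z) = (M(z), M'(z), …, M^{(ν−1)}(z)) ∈ ℝ^{q×νr}`. -/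
def M0cal (q r ν : ℕ) (z : ℝ) : Matrix (Fin q) (Fin ν × Fin r) ℝ :=
  Matrix.of fun a p => Md q r (p.1 : ℕ) z a p.2

/-- `U_q(z)` with columns `u(z), u'(z), …, u^{(q−1)}(z)`, where `u_a(z) = z^a`. -/
def Uq (q : ℕ) (z : ℝ) : Matrix (Fin q) (Fin q) ℝ :=
  Matrix.of fun a j => iteratedDeriv (j : ℕ) (fun t : ℝ => t ^ (a : ℕ)) z

/-- `W_r(z)` with rows `w(z), w'(z), …, w^{(r−1)}(z)`, where `w_b(z) = z^b`. -/
def Wrm (r : ℕ) (z : ℝ) : Matrix (Fin r) (Fin r) ℝ :=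
  Matrix.of fun i b => iteratedDeriv (i : ℕ) (fun t : ℝ => t ^ (b : ℕ)) z

/-- `Ũ_m(z)` with entries `C(i,j)·z^{i−j}` for `i ≥ j` and `0` otherwise. -/
def Ut (m : ℕ) (z : ℝ) : Matrix (Fin m) (Fin m) ℝ :=
  Matrix.of fun i j =>
    if (j : ℕ) ≤ (i : ℕ) then (Nat.choose i j : ℝ) * z ^ ((i : ℕ) - (j : ℕ)) else 0

/-- `W̃_m(z)` with entries `C(j,i)·z^{j−i}` for `j ≥ i` and `0` otherwise. -/
def Wt (m : ℕ) (z : ℝ) : Matrix (Fin m) (Fin m) ℝ :=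
  Matrix.of fun i j =>
    if (i : ℕ) ≤ (j : ℕ) then (Nat.choose j i : ℝ) * z ^ ((j : ℕ) - (i : ℕ)) else 0

/-- `D_m`, the diagonal matrix with `(i,i)` entry `i!`. -/
def Dm (m : ℕ) : Matrix (Fin m) (Fin m) ℝ :=
  Matrix.diagonal fun i => (Nat.factorial (i : ℕ) : ℝ)

/-- The block matrix `Â` whose `(i,j)` block has `(k,l)` entry `C(i+j,i)` if `k+l = i+j`, else 0. -/
def Ahat (q r μ ν : ℕ) : Matrix (Fin μ × Fin q) (Fin ν × Fin r) ℝ :=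
  Matrix.of fun p p' =>
    if (p.2 : ℕ) + (p'.2 : ℕ) = (p.1 : ℕ) + (p'.1 : ℕ) then
      (Nat.choose ((p.1 : ℕ) + (p'.1 : ℕ)) (p.1 : ℕ) : ℝ)
    else 0

/-- `F(z) ∈ ℝ^{r×(r−1)}` with `F_{ii} = −z`, `F_{i+1,i} = 1`, else `0`. -/
def Fm (r : ℕ) (z : ℝ) : Matrix (Fin r) (Fin (r - 1)) ℝ :=
  Matrix.of fun a b =>
    if (a : ℕ) = (b : ℕ) then -z else if (a : ℕ) = (b : ℕ) + 1 then 1 else 0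

/-- `F'(z)`, the (constant) derivative of `F(z)`: `−1` on the diagonal, `0` elsewhere. -/
def Fm' (r : ℕ) : Matrix (Fin r) (Fin (r - 1)) ℝ :=
  Matrix.of fun a b => if (a : ℕ) = (b : ℕ) then -1 else 0

/-- `G(z) ∈ ℝ^{r×r}` with entries `z^{j−i−1}` for `j > i`, else `0`. -/
def Gm (r : ℕ) (z : ℝ) : Matrix (Fin r) (Fin r) ℝ :=
  Matrix.of fun i j => if (i : ℕ) < (j : ℕ) then z ^ ((j : ℕ) - (i : ℕ) - 1) else 0

/-- entrywise `j`-th derivative `G^{(n)}(z)`. -/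
def Gd (r n : ℕ) (z : ℝ) : Matrix (Fin r) (Fin r) ℝ :=
  Matrix.of fun i j =>
    iteratedDeriv n (fun t : ℝ => if (i : ℕ) < (j : ℕ) then t ^ ((j : ℕ) - (i : ℕ) - 1) else 0) z

/-- the row vector `w(z)` with entries `z^b`. -/
def wv (r : ℕ) (z : ℝ) : Fin r → ℝ := fun b => z ^ (b : ℕ)

/-- the `n`-th derivative `w^{(n)}(z)`. -/
def wd (r n : ℕ) (z : ℝ) : Fin r → ℝ := fun b => iteratedDeriv n (fun t : ℝ => t ^ (b : ℕ)) z

/-- the `n`-th derivative `u^{(n)}(z)` of the column vector `u(z)` with entries `z^a`. -/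
def ud (q n : ℕ) (z : ℝ) : Fin q → ℝ := fun a => iteratedDeriv n (fun t : ℝ => t ^ (a : ℕ)) z

/-- The matrix `K̄(z)`:
`[[I_q⊗F(z) + S_q⊗F'(z), −ℓ_q fᵀ ⊗ G(z)], [0, I_{ν−q}⊗I_r − S_{ν−q}⊗G(z)]]`. -/
def Kbar (q r ν : ℕ) (z : ℝ) :
    Matrix (Fin ν × Fin r) ((Fin q × Fin (r - 1)) ⊕ (Fin (ν - q) × Fin r)) ℝ :=
  Matrix.of fun p s =>
    match s with
    | Sum.inl c =>
        (if (p.1 : ℕ) = (c.1 : ℕ) then Fm r z p.2 c.2 else 0) +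
        (if (p.1 : ℕ) + 1 = (c.1 : ℕ) then Fm' r p.2 c.2 else 0)
    | Sum.inr c =>
        (if (p.1 : ℕ) = q + (c.1 : ℕ) then (if p.2 = c.2 then 1 else 0) else 0) +
        (if (p.1 : ℕ) + 1 = q + (c.1 : ℕ) then -(Gm r z p.2 c.2) else 0)

/-- `F_k(z) ∈ ℝ^{(r−k)×(r−1−k)}`. -/
def Fmk (r k : ℕ) (z : ℝ) : Matrix (Fin (r - k)) (Fin (r - (k + 1))) ℝ :=
  Matrix.of fun a b =>
    if (a : ℕ) = (b : ℕ) then -z else if (a : ℕ) = (b : ℕ) + 1 then 1 else 0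

/-- `F_k'(z)`, the (constant) derivative of `F_k(z)`. -/
def Fmk' (r k : ℕ) : Matrix (Fin (r - k)) (Fin (r - (k + 1))) ℝ :=
  Matrix.of fun a b => if (a : ℕ) = (b : ℕ) then -1 else 0

/-- `K_k(z) = I_ν ⊗ F_k(z) + S_ν ⊗ F_k'(z)`. -/
def Kk (ν r k : ℕ) (z : ℝ) :
    Matrix (Fin ν × Fin (r - k)) (Fin ν × Fin (r - (k + 1))) ℝ :=
  (1 : Matrix (Fin ν) (Fin ν) ℝ) ⊗ₖ Fmk r k z + Sh ν ⊗ₖ Fmk' r k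

/-- `KP ν r z m = K_0(z) · K_1(z) ⋯ K_{m−1}(z)` (so `KP ν r z μ = 𝒦^{μ−1}(z)`). -/
def KP (ν r : ℕ) (z : ℝ) : (m : ℕ) → Matrix (Fin ν × Fin r) (Fin ν × Fin (r - m)) ℝ
  | 0 => Matrix.of fun p p' => if p.1 = p'.1 ∧ (p.2 : ℕ) = (p'.2 : ℕ) then 1 else 0
  | m + 1 => KP ν r z m * Kk ν r m z

/-- `𝒜^0 = (A^0, A^1, …, A^{ν−1}) ∈ ℝ^{q×νr}` (at `z = 0`). -/
def A0row (q r ν : ℕ) : Matrix (Fin q) (Fin ν × Fin r) ℝ :=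
  Matrix.of fun a p =>
    if (a : ℕ) + (p.2 : ℕ) = (p.1 : ℕ) then (Nat.choose (p.1 : ℕ) (a : ℕ) : ℝ) else 0

/-- `B^k ∈ ℝ^{r×q}` with entries `(−1)^i·C(q,k+1)` if `i+j = k`, else `0`. -/
def Bk (q r k : ℕ) : Matrix (Fin r) (Fin q) ℝ :=
  Matrix.of fun i j =>
    if (i : ℕ) + (j : ℕ) = k then (-1 : ℝ) ^ (i : ℕ) * (Nat.choose q (k + 1) : ℝ) else 0

/-- `𝓑^0 ∈ ℝ^{νr×q}`, the blocks `B^0, …, B^{ν−1}` stacked vertically. -/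
def B0cal (q r ν : ℕ) : Matrix (Fin ν × Fin r) (Fin q) ℝ :=
  Matrix.of fun p j => Bk q r (p.1 : ℕ) p.2 j

/-- Left multiplication by a fixed matrix, as a linear map. -/
def mulLeftLM {m n p : Type*} [Fintype n] (M : Matrix m n ℝ) :
    Matrix n p ℝ →ₗ[ℝ] Matrix m p ℝ where
  toFun X := M * X
  map_add' X Y := Matrix.mul_add M X Y
  map_smul' c X := by simp [Matrix.mul_smul]

/-- The right inverse `𝓜(z)⁺`. -/
def Mplus (q r μ ν : ℕ) (z : ℝ) : Matrix (Fin ν × Fin r) (Fin μ × Fin q) ℝ :=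
  ((1 : Matrix (Fin ν) (Fin ν) ℝ) ⊗ₖ (Wrm r z)⁻¹) * (Lmat ν r 0)⁻¹ *
    (Abar q r μ ν)ᵀ * (Lmat μ q 0)⁻¹ * ((1 : Matrix (Fin μ) (Fin μ) ℝ) ⊗ₖ (Uq q z)⁻¹)


/-! ### Auxiliary development -/

section Aux

open Finset Polynomial

lemma myIteratedDeriv_pow (m n : ℕ) :
    iteratedDeriv n (fun t : ℝ => t ^ m) = fun z : ℝ => (m.descFactorial n : ℝ) * z ^ (m - n) := by
  induction n with
  | zero => funext z; simp
  | succ n ih =>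
    rw [iteratedDeriv_succ, ih]
    funext z
    rw [deriv_const_mul _ (differentiableAt_pow _), deriv_pow_field, Nat.descFactorial_succ,
      ← Nat.sub_sub]
    push_cast
    ring

lemma sum_ite_shift (N n s : ℕ) (hn : n < N) (F : ℕ → ℝ) :
    ∑ t ∈ Finset.range N, (if s + t = n then F t else 0)
      = if s ≤ n then F (n - s) else 0 := by
  by_cases hs : s ≤ n
  · rw [if_pos hs, Finset.sum_eq_single (n - s)]
    · rw [if_pos (by omega)]
    · intro t ht hne; rw [if_neg (by omega)]
    · intro h; exact absurd (Finset.mem_range.mpr (by omega)) h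
  · rw [if_neg hs]; exact Finset.sum_eq_zero fun t _ => if_neg (by omega)

lemma desc_vandermonde (a b n : ℕ) :
    ∑ s ∈ Finset.range (n + 1), n.choose s * (a.descFactorial s * b.descFactorial (n - s))
      = (a + b).descFactorial n := by
  rw [Nat.descFactorial_eq_factorial_mul_choose, Nat.add_choose_eq, Finset.mul_sum,
    Finset.Nat.sum_antidiagonal_eq_sum_range_succ_mk]
  refine Finset.sum_congr rfl fun s hs => ?_
  have hsn : s ≤ n := by
    have := Finset.mem_range.mp hs; omega
  rw [Nat.descFactorial_eq_factorial_mul_choose a, Nat.descFactorial_eq_factorial_mul_choose b,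
    ← Nat.choose_mul_factorial_mul_factorial hsn]
  ring

lemma keysum (q r n a b : ℕ) (ha : a < q) (hb : b < r) (z : ℝ) :
    ∑ s : Fin q, ∑ t : Fin r,
        ((a.descFactorial (s : ℕ) : ℝ) * z ^ (a - (s : ℕ)))
          * ((if (s : ℕ) + (t : ℕ) = n then (n.choose (s : ℕ) : ℝ) else 0)
          * ((b.descFactorial (t : ℕ) : ℝ) * z ^ (b - (t : ℕ))))
      = ((a + b).descFactorial n : ℝ) * z ^ (a + b - n) := by
  set N := n + 1 + q + r with hN
  have hinner : ∀ s : ℕ,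
      (∑ t : Fin r, ((a.descFactorial s : ℝ) * z ^ (a - s))
          * ((if s + (t : ℕ) = n then (n.choose s : ℝ) else 0)
          * ((b.descFactorial (t : ℕ) : ℝ) * z ^ (b - (t : ℕ)))))
        = if s ≤ n then ((a.descFactorial s : ℝ) * z ^ (a - s))
            * ((n.choose s : ℝ) * ((b.descFactorial (n - s) : ℝ) * z ^ (b - (n - s)))) else 0 := by
    intro s
    rw [Fin.sum_univ_eq_sum_range (fun t => ((a.descFactorial s : ℝ) * z ^ (a - s))
          * ((if s + t = n then (n.choose s : ℝ) else 0)
          * ((b.descFactorial t : ℝ) * z ^ (b - t)))) r]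
    have hext : ∑ t ∈ Finset.range r, ((a.descFactorial s : ℝ) * z ^ (a - s))
          * ((if s + t = n then (n.choose s : ℝ) else 0)
          * ((b.descFactorial t : ℝ) * z ^ (b - t)))
        = ∑ t ∈ Finset.range N, ((a.descFactorial s : ℝ) * z ^ (a - s))
          * ((if s + t = n then (n.choose s : ℝ) else 0)
          * ((b.descFactorial t : ℝ) * z ^ (b - t))) := by
      refine Finset.sum_subset (Finset.range_subset_range.mpr (by omega)) ?_
      intro t ht hnt
      have hrt : r ≤ t := by
        by_contra hcon
        exact hnt (Finset.mem_range.mpr (by omega))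
      have : b.descFactorial t = 0 := Nat.descFactorial_eq_zero_iff_lt.mpr (by omega)
      simp [this]
    rw [hext]
    have hcongr : ∀ t ∈ Finset.range N,
        ((a.descFactorial s : ℝ) * z ^ (a - s))
          * ((if s + t = n then (n.choose s : ℝ) else 0)
          * ((b.descFactorial t : ℝ) * z ^ (b - t)))
        = if s + t = n then ((a.descFactorial s : ℝ) * z ^ (a - s))
            * ((n.choose s : ℝ) * ((b.descFactorial t : ℝ) * z ^ (b - t))) else 0 := by
      intro t _
      by_cases h : s + t = n <;> simp [h]
    rw [Finset.sum_congr rfl hcongr, sum_ite_shift N n s (by omega)]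
  rw [Fin.sum_univ_eq_sum_range (fun s => ∑ t : Fin r,
        ((a.descFactorial s : ℝ) * z ^ (a - s))
          * ((if s + (t : ℕ) = n then (n.choose s : ℝ) else 0)
          * ((b.descFactorial (t : ℕ) : ℝ) * z ^ (b - (t : ℕ))))) q]
  rw [Finset.sum_congr rfl fun s _ => hinner s]
  have hA : ∑ s ∈ Finset.range q, (if s ≤ n then ((a.descFactorial s : ℝ) * z ^ (a - s))
            * ((n.choose s : ℝ) * ((b.descFactorial (n - s) : ℝ) * z ^ (b - (n - s)))) else 0)
      = ∑ s ∈ Finset.range N, (if s ≤ n then ((a.descFactorial s : ℝ) * z ^ (a - s))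
            * ((n.choose s : ℝ) * ((b.descFactorial (n - s) : ℝ) * z ^ (b - (n - s)))) else 0) := by
    refine Finset.sum_subset (Finset.range_subset_range.mpr (by omega)) ?_
    intro s hs hns
    have hqs : q ≤ s := by
      by_contra hcon
      exact hns (Finset.mem_range.mpr (by omega))
    have hd : a.descFactorial s = 0 := Nat.descFactorial_eq_zero_iff_lt.mpr (by omega)
    simp [hd]
  have hB : ∑ s ∈ Finset.range N, (if s ≤ n then ((a.descFactorial s : ℝ) * z ^ (a - s))
            * ((n.choose s : ℝ) * ((b.descFactorial (n - s) : ℝ) * z ^ (b - (n - s)))) else 0)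
      = ∑ s ∈ Finset.range (n + 1), (if s ≤ n then ((a.descFactorial s : ℝ) * z ^ (a - s))
            * ((n.choose s : ℝ) * ((b.descFactorial (n - s) : ℝ) * z ^ (b - (n - s)))) else 0) := by
    refine (Finset.sum_subset (Finset.range_subset_range.mpr (by omega)) ?_).symm
    intro s hs hns
    have hsn : n < s := by
      by_contra hcon
      exact hns (Finset.mem_range.mpr (by omega))
    rw [if_neg (by omega)]
  have hC : ∑ s ∈ Finset.range (n + 1), (if s ≤ n then ((a.descFactorial s : ℝ) * z ^ (a - s))
            * ((n.choose s : ℝ) * ((b.descFactorial (n - s) : ℝ) * z ^ (b - (n - s)))) else 0)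
      = ∑ s ∈ Finset.range (n + 1), ((a.descFactorial s : ℝ) * z ^ (a - s))
            * ((n.choose s : ℝ) * ((b.descFactorial (n - s) : ℝ) * z ^ (b - (n - s)))) :=
    Finset.sum_congr rfl fun s hs => if_pos (by have := Finset.mem_range.mp hs; omega)
  rw [hA, hB, hC]
  have hterm : ∀ s ∈ Finset.range (n + 1),
      ((a.descFactorial s : ℝ) * z ^ (a - s))
          * ((n.choose s : ℝ) * ((b.descFactorial (n - s) : ℝ) * z ^ (b - (n - s))))
      = ((n.choose s * (a.descFactorial s * b.descFactorial (n - s)) : ℕ) : ℝ)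
          * z ^ (a + b - n) := by
    intro s hs
    have hsn : s ≤ n := by have := Finset.mem_range.mp hs; omega
    by_cases hz : s ≤ a ∧ n - s ≤ b
    · have hexp : (a - s) + (b - (n - s)) = a + b - n := by omega
      push_cast
      rw [← hexp, pow_add]
      ring
    · rcases not_and_or.mp hz with h | h
      · have : a.descFactorial s = 0 := Nat.descFactorial_eq_zero_iff_lt.mpr (by omega)
        simp [this]
      · have : b.descFactorial (n - s) = 0 := Nat.descFactorial_eq_zero_iff_lt.mpr (by omega)
        simp [this]
  rw [Finset.sum_congr rfl hterm, ← Finset.sum_mul, ← Nat.cast_sum, desc_vandermonde]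

lemma keysum' (q r n a b : ℕ) (ha : a < q) (hb : b < r) (z : ℝ) :
    ∑ t : Fin r, ∑ s : Fin q,
        ((a.descFactorial (s : ℕ) : ℝ) * z ^ (a - (s : ℕ)))
          * ((if (s : ℕ) + (t : ℕ) = n then (n.choose (s : ℕ) : ℝ) else 0)
          * ((b.descFactorial (t : ℕ) : ℝ) * z ^ (b - (t : ℕ))))
      = ((a + b).descFactorial n : ℝ) * z ^ (a + b - n) := by
  rw [← keysum q r n a b ha hb z]
  exact Finset.sum_comm

/-- The combinatorial core matrix. -/
def Ctil (q r μ ν : ℕ) : Matrix (Fin μ × Fin q) (Fin ν × Fin r) ℝ :=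
  Matrix.of fun p p' =>
    if (p.2 : ℕ) + (p'.2 : ℕ) = (p.1 : ℕ) + (p'.1 : ℕ)
    then ((((p.1 : ℕ) + (p'.1 : ℕ)).choose (p.2 : ℕ) : ℕ) : ℝ) else 0

/-- Left factor. -/
def Pmt (q μ : ℕ) (z : ℝ) : Matrix (Fin μ × Fin q) (Fin μ × Fin q) ℝ :=
  (Matrix.diagonal fun i : Fin μ => ((Nat.factorial (i : ℕ) : ℝ))⁻¹) ⊗ₖ Uq q z

/-- Right factor. -/
def Qmt (r ν : ℕ) (z : ℝ) : Matrix (Fin ν × Fin r) (Fin ν × Fin r) ℝ :=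
  (Matrix.diagonal fun j : Fin ν => ((Nat.factorial (j : ℕ) : ℝ))⁻¹) ⊗ₖ Wrm r z

lemma Uq_apply (q : ℕ) (z : ℝ) (a s : Fin q) :
    Uq q z a s = ((a : ℕ).descFactorial (s : ℕ) : ℝ) * z ^ ((a : ℕ) - (s : ℕ)) := by
  show iteratedDeriv (s : ℕ) (fun t : ℝ => t ^ (a : ℕ)) z = _
  rw [myIteratedDeriv_pow]

lemma Wrm_apply (r : ℕ) (z : ℝ) (t b : Fin r) :
    Wrm r z t b = ((b : ℕ).descFactorial (t : ℕ) : ℝ) * z ^ ((b : ℕ) - (t : ℕ)) := by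
  show iteratedDeriv (t : ℕ) (fun x : ℝ => x ^ (b : ℕ)) z = _
  rw [myIteratedDeriv_pow]

lemma Md_apply (q r n : ℕ) (z : ℝ) (a : Fin q) (b : Fin r) :
    Md q r n z a b = (((a : ℕ) + (b : ℕ)).descFactorial n : ℝ) * z ^ ((a : ℕ) + (b : ℕ) - n) := by
  show iteratedDeriv n (fun t : ℝ => t ^ ((a : ℕ) + (b : ℕ))) z = _
  rw [myIteratedDeriv_pow]

lemma ite_swap_zero {P Q : Prop} [Decidable P] [Decidable Q] (X : ℝ) :
    (if P then (if Q then X else 0) else 0) = (if Q then (if P then X else 0) else 0) := by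
  by_cases h : P <;> by_cases h2 : Q <;> simp [h, h2]

lemma sum_pull_ite {α : Type*} [Fintype α] {P : Prop} [Decidable P] (F : α → ℝ) :
    (∑ x : α, if P then F x else 0) = if P then ∑ x : α, F x else 0 := by
  split_ifs with h <;> simp

lemma PC_apply (q r μ ν : ℕ) (z : ℝ) (i : Fin μ) (a : Fin q) (j' : Fin ν) (t : Fin r) :
    (Pmt q μ z * Ctil q r μ ν) (i, a) (j', t)
      = ((Nat.factorial (i : ℕ) : ℝ))⁻¹ * ∑ s : Fin q, Uq q z a s *
          (if (s : ℕ) + (t : ℕ) = (i : ℕ) + (j' : ℕ)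
            then ((((i : ℕ) + (j' : ℕ)).choose (s : ℕ) : ℕ) : ℝ) else 0) := by
  rw [Matrix.mul_apply, Fintype.sum_prod_type]
  have hpt : ∀ (x2 : Fin μ) (x3 : Fin q),
      Pmt q μ z (i, a) (x2, x3) * Ctil q r μ ν (x2, x3) (j', t)
      = if i = x2 then ((Nat.factorial (i : ℕ) : ℝ))⁻¹ * (Uq q z a x3 *
          (if (x3 : ℕ) + (t : ℕ) = (i : ℕ) + (j' : ℕ)
            then ((((i : ℕ) + (j' : ℕ)).choose (x3 : ℕ) : ℕ) : ℝ) else 0)) else 0 := by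
    intro x2 x3
    simp only [Pmt, Ctil, Matrix.kroneckerMap_apply, Matrix.diagonal_apply, Matrix.of_apply]
    by_cases h : i = x2
    · subst h; simp [mul_ite, mul_assoc]
    · simp [h]
  rw [Finset.sum_congr rfl fun x2 _ => Finset.sum_congr rfl fun x3 _ => hpt x2 x3]
  rw [Finset.sum_congr rfl fun x2 (_ : x2 ∈ Finset.univ) =>
    sum_pull_ite (α := Fin q) (P := i = x2) _]
  rw [Finset.sum_ite_eq, if_pos (Finset.mem_univ i), Finset.mul_sum]

lemma Ncal_factor (q r μ ν : ℕ) (z : ℝ) :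
    Ncal q r μ ν z = Pmt q μ z * Ctil q r μ ν * Qmt r ν z := by
  refine Matrix.ext fun p p' => ?_
  obtain ⟨i, a⟩ := p
  obtain ⟨j, b⟩ := p'
  show Md q r ((i : ℕ) + (j : ℕ)) z a b
      / ((Nat.factorial (i : ℕ) : ℝ) * (Nat.factorial (j : ℕ) : ℝ)) = _
  rw [Md_apply, Matrix.mul_apply, Fintype.sum_prod_type]
  have hpt : ∀ (j' : Fin ν) (t : Fin r),
      (Pmt q μ z * Ctil q r μ ν) (i, a) (j', t) * Qmt r ν z (j', t) (j, b)
      = if j' = j then (((Nat.factorial (i : ℕ) : ℝ))⁻¹ * ∑ s : Fin q, Uq q z a s *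
          (if (s : ℕ) + (t : ℕ) = (i : ℕ) + (j : ℕ)
            then ((((i : ℕ) + (j : ℕ)).choose (s : ℕ) : ℕ) : ℝ) else 0)) *
          (((Nat.factorial (j : ℕ) : ℝ))⁻¹ * Wrm r z t b) else 0 := by
    intro j' t
    rw [PC_apply]
    simp only [Qmt, Matrix.kroneckerMap_apply, Matrix.diagonal_apply]
    by_cases h : j' = j
    · subst h; simp
    · simp [h]
  rw [Finset.sum_congr rfl fun j' _ => Finset.sum_congr rfl fun t _ => hpt j' t]
  rw [Finset.sum_congr rfl fun j' (_ : j' ∈ Finset.univ) =>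
    sum_pull_ite (α := Fin r) (P := j' = j) _]
  rw [Finset.sum_ite_eq', if_pos (Finset.mem_univ j)]
  -- now both sides explicit
  have hfi : ((Nat.factorial (i : ℕ) : ℝ)) ≠ 0 := Nat.cast_ne_zero.mpr (Nat.factorial_ne_zero _)
  have hfj : ((Nat.factorial (j : ℕ) : ℝ)) ≠ 0 := Nat.cast_ne_zero.mpr (Nat.factorial_ne_zero _)
  have hsum : ∑ t : Fin r, (((Nat.factorial (i : ℕ) : ℝ))⁻¹ * ∑ s : Fin q, Uq q z a s *
          (if (s : ℕ) + (t : ℕ) = (i : ℕ) + (j : ℕ)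
            then ((((i : ℕ) + (j : ℕ)).choose (s : ℕ) : ℕ) : ℝ) else 0)) *
          (((Nat.factorial (j : ℕ) : ℝ))⁻¹ * Wrm r z t b)
      = (((Nat.factorial (i : ℕ) : ℝ))⁻¹ * ((Nat.factorial (j : ℕ) : ℝ))⁻¹) *
        ∑ t : Fin r, ∑ s : Fin q,
        (((a : ℕ).descFactorial (s : ℕ) : ℝ) * z ^ ((a : ℕ) - (s : ℕ)))
          * ((if (s : ℕ) + (t : ℕ) = (i : ℕ) + (j : ℕ)
              then ((((i : ℕ) + (j : ℕ)).choose (s : ℕ)) : ℝ) else 0)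
          * (((b : ℕ).descFactorial (t : ℕ) : ℝ) * z ^ ((b : ℕ) - (t : ℕ)))) := by
    have h1 : ∀ t : Fin r, (((Nat.factorial (i : ℕ) : ℝ))⁻¹ * ∑ s : Fin q, Uq q z a s *
          (if (s : ℕ) + (t : ℕ) = (i : ℕ) + (j : ℕ)
            then ((((i : ℕ) + (j : ℕ)).choose (s : ℕ) : ℕ) : ℝ) else 0)) *
          (((Nat.factorial (j : ℕ) : ℝ))⁻¹ * Wrm r z t b)
        = ∑ s : Fin q, (((Nat.factorial (i : ℕ) : ℝ))⁻¹ * ((Nat.factorial (j : ℕ) : ℝ))⁻¹) *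
            ((((a : ℕ).descFactorial (s : ℕ) : ℝ) * z ^ ((a : ℕ) - (s : ℕ)))
          * ((if (s : ℕ) + (t : ℕ) = (i : ℕ) + (j : ℕ)
              then ((((i : ℕ) + (j : ℕ)).choose (s : ℕ)) : ℝ) else 0)
          * (((b : ℕ).descFactorial (t : ℕ) : ℝ) * z ^ ((b : ℕ) - (t : ℕ))))) := by
      intro t
      rw [Finset.mul_sum, Finset.sum_mul]
      refine Finset.sum_congr rfl fun s _ => ?_
      rw [Uq_apply, Wrm_apply]
      ring
    rw [Finset.sum_congr rfl fun t _ => h1 t]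
    simp only [← Finset.mul_sum]
  rw [hsum, keysum' q r ((i : ℕ) + (j : ℕ)) (a : ℕ) (b : ℕ) a.isLt b.isLt z]
  field_simp

lemma isUnit_det_Uq (q : ℕ) (z : ℝ) : IsUnit (Uq q z).det := by
  have htri : (Uq q z).BlockTriangular OrderDual.toDual := by
    intro a s h
    have hlt : (a : ℕ) < (s : ℕ) := h
    rw [Uq_apply, Nat.descFactorial_eq_zero_iff_lt.mpr hlt]
    simp
  rw [Matrix.det_of_lowerTriangular _ htri, isUnit_iff_ne_zero]
  refine Finset.prod_ne_zero_iff.mpr fun a _ => ?_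
  rw [Uq_apply]
  simp [Nat.descFactorial_self, Nat.factorial_ne_zero]

lemma isUnit_det_Wrm (r : ℕ) (z : ℝ) : IsUnit (Wrm r z).det := by
  have htri : (Wrm r z).BlockTriangular id := by
    intro i b h
    have hlt : (b : ℕ) < (i : ℕ) := h
    rw [Wrm_apply, Nat.descFactorial_eq_zero_iff_lt.mpr hlt]
    simp
  rw [Matrix.det_of_upperTriangular htri, isUnit_iff_ne_zero]
  refine Finset.prod_ne_zero_iff.mpr fun b _ => ?_
  rw [Wrm_apply]
  simp [Nat.descFactorial_self, Nat.factorial_ne_zero]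

lemma isUnit_det_Pmt (q μ : ℕ) (z : ℝ) : IsUnit (Pmt q μ z).det := by
  rw [Pmt, Matrix.det_kronecker]
  refine IsUnit.mul (IsUnit.pow _ ?_) (IsUnit.pow _ (isUnit_det_Uq q z))
  rw [Matrix.det_diagonal, isUnit_iff_ne_zero]
  exact Finset.prod_ne_zero_iff.mpr fun i _ =>
    inv_ne_zero (Nat.cast_ne_zero.mpr (Nat.factorial_ne_zero _))

lemma isUnit_det_Qmt (r ν : ℕ) (z : ℝ) : IsUnit (Qmt r ν z).det := by
  rw [Qmt, Matrix.det_kronecker]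
  refine IsUnit.mul (IsUnit.pow _ ?_) (IsUnit.pow _ (isUnit_det_Wrm r z))
  rw [Matrix.det_diagonal, isUnit_iff_ne_zero]
  exact Finset.prod_ne_zero_iff.mpr fun i _ =>
    inv_ne_zero (Nat.cast_ne_zero.mpr (Nat.factorial_ne_zero _))

lemma rank_Ncal_eq (q r μ ν : ℕ) (z : ℝ) :
    (Ncal q r μ ν z).rank = (Ctil q r μ ν).rank := by
  rw [Ncal_factor, Matrix.rank_mul_eq_left_of_isUnit_det _ _ (isUnit_det_Qmt r ν z),
    Matrix.rank_mul_eq_right_of_isUnit_det _ _ (isUnit_det_Pmt q μ z)]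

lemma key_poly (i₀ s₀ m₁ : ℕ) (g : ℕ → ℝ)
    (hsum : ∀ n, max i₀ s₀ ≤ n → n < m₁ →
      ∑ m ∈ Finset.Ico (max i₀ s₀) m₁, g m * ((m + n - (i₀ + s₀)).choose (m - i₀) : ℝ) = 0) :
    ∀ m ∈ Finset.Ico (max i₀ s₀) m₁, g m = 0 := by
  rcases le_or_gt m₁ (max i₀ s₀) with hemp | hm₀₁
  · intro m hm
    rw [Finset.mem_Ico] at hm
    omega
  set m₀ := max i₀ s₀ with hm₀
  set φ : ℕ → Polynomial ℝ := fun m =>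
    Polynomial.C (((m - i₀).factorial : ℝ))⁻¹ *
      ((descPochhammer ℝ (m - i₀)).comp
        (Polynomial.X + Polynomial.C ((m : ℝ) - ((i₀ : ℝ) + (s₀ : ℝ))))) with hφ
  set F : Polynomial ℝ := ∑ m ∈ Finset.Ico m₀ m₁, Polynomial.C (g m) * φ m with hF
  have hcompdeg : ∀ m, ((descPochhammer ℝ (m - i₀)).comp
      (Polynomial.X + Polynomial.C ((m : ℝ) - ((i₀ : ℝ) + (s₀ : ℝ))))).natDegree = m - i₀ := by
    intro m
    rw [Polynomial.natDegree_comp, Polynomial.natDegree_X_add_C, mul_one,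
      descPochhammer_natDegree]
  have hφdeg : ∀ m, (φ m).natDegree ≤ m - i₀ := fun m =>
    (Polynomial.natDegree_C_mul_le _ _).trans (le_of_eq (hcompdeg m))
  have hφcoeff : ∀ m, (φ m).coeff (m - i₀) = (((m - i₀).factorial : ℝ))⁻¹ := by
    intro m
    have h2 := ((monic_descPochhammer ℝ (m - i₀)).comp_X_add_C
      ((m : ℝ) - ((i₀ : ℝ) + (s₀ : ℝ)))).coeff_natDegree
    rw [hcompdeg m] at h2
    rw [hφ]
    simp only []
    rw [Polynomial.coeff_C_mul, h2, mul_one]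
  have hφeval : ∀ m, m₀ ≤ m → ∀ n : ℕ, i₀ + s₀ ≤ m + n →
      (φ m).eval (n : ℝ) = ((m + n - (i₀ + s₀)).choose (m - i₀) : ℝ) := by
    intro m hm n hn
    rw [hφ]
    simp only [Polynomial.eval_mul, Polynomial.eval_C, Polynomial.eval_comp,
      Polynomial.eval_add, Polynomial.eval_X]
    have hcast : (n : ℝ) + ((m : ℝ) - ((i₀ : ℝ) + (s₀ : ℝ)))
        = ((m + n - (i₀ + s₀) : ℕ) : ℝ) := by
      rw [Nat.cast_sub hn]
      push_cast
      ring
    rw [hcast, descPochhammer_eval_eq_descFactorial,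
      Nat.descFactorial_eq_factorial_mul_choose]
    push_cast
    rw [← mul_assoc, inv_mul_cancel₀ (Nat.cast_ne_zero.mpr (Nat.factorial_ne_zero _)), one_mul]
  -- the root set
  set S : Finset ℕ := Finset.Ico (min i₀ s₀) s₀ ∪ Finset.Ico m₀ m₁ with hS
  have hFeval : ∀ n ∈ S, F.eval (n : ℝ) = 0 := by
    intro n hn
    rw [hF, Polynomial.eval_finset_sum]
    rw [hS, Finset.mem_union] at hn
    rcases hn with hn | hn
    · rw [Finset.mem_Ico] at hn
      refine Finset.sum_eq_zero fun m hm => ?_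
      rw [Finset.mem_Ico] at hm
      rw [Polynomial.eval_mul, Polynomial.eval_C,
        hφeval m hm.1 n (by omega),
        Nat.choose_eq_zero_of_lt (by omega), Nat.cast_zero, mul_zero]
    · rw [Finset.mem_Ico] at hn
      have := hsum n hn.1 hn.2
      rw [← this]
      refine Finset.sum_congr rfl fun m hm => ?_
      rw [Finset.mem_Ico] at hm
      rw [Polynomial.eval_mul, Polynomial.eval_C, hφeval m hm.1 n (by omega)]
  have hcardS : m₁ - 1 - i₀ < S.card := by
    rw [hS, Finset.card_union_of_disjoint, Nat.card_Ico, Nat.card_Ico]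
    · omega
    · rw [Finset.disjoint_left]
      intro x hx hx'
      rw [Finset.mem_Ico] at hx hx'
      omega
  have hFdeg : F.natDegree ≤ m₁ - 1 - i₀ := by
    rw [hF]
    refine Polynomial.natDegree_sum_le_of_forall_le _ _ fun m hm => ?_
    rw [Finset.mem_Ico] at hm
    exact (Polynomial.natDegree_C_mul_le _ _).trans ((hφdeg m).trans (by omega))
  have hFzero : F = 0 := by
    refine Polynomial.eq_zero_of_natDegree_lt_card_of_eval_eq_zero' F
      (S.image (Nat.cast : ℕ → ℝ)) ?_ ?_
    · intro x hx
      rw [Finset.mem_image] at hx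
      obtain ⟨n, hn, rfl⟩ := hx
      exact hFeval n hn
    · rw [Finset.card_image_of_injective _ Nat.cast_injective]
      omega
  have hzero : ∀ k, ∀ m ∈ Finset.Ico m₀ m₁, m₁ - m ≤ k → g m = 0 := by
    intro k
    induction k with
    | zero =>
      intro m hm hk
      rw [Finset.mem_Ico] at hm
      omega
    | succ k ih =>
      intro m hm hk
      have hcoeff : F.coeff (m - i₀) = 0 := by rw [hFzero, Polynomial.coeff_zero]
      rw [hF, Polynomial.finset_sum_coeff, Finset.sum_eq_single m] at hcoeff
      · rw [Polynomial.coeff_C_mul, hφcoeff m] at hcoeff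
        have hne : (((m - i₀).factorial : ℝ))⁻¹ ≠ 0 :=
          inv_ne_zero (Nat.cast_ne_zero.mpr (Nat.factorial_ne_zero _))
        exact (mul_eq_zero.mp hcoeff).resolve_right hne
      · intro m' hm' hne
        rw [Polynomial.coeff_C_mul]
        rw [Finset.mem_Ico] at hm' hm
        rcases lt_or_gt_of_ne hne with hlt | hgt
        · rw [Polynomial.coeff_eq_zero_of_natDegree_lt
            (lt_of_le_of_lt (hφdeg m') (by omega)), mul_zero]
        · rw [ih m' (Finset.mem_Ico.mpr hm') (by omega), zero_mul]
      · intro hmem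
        exact absurd hm hmem
  intro m hm
  exact hzero (m₁ - m) m hm le_rfl

/-- The chosen rows: those with block-row index `< r`. -/
def chosenRows (q r μ ν : ℕ) : {p : Fin μ × Fin q // (p.1 : ℕ) < r} → (Fin ν × Fin r → ℝ) :=
  fun p => Ctil q r μ ν p.val

lemma chosen_li (q r μ ν : ℕ) (hνq : q + 1 ≤ ν) :
    LinearIndependent ℝ (chosenRows q r μ ν) := by
  rw [Fintype.linearIndependent_iff]
  intro g hg p₀
  obtain ⟨⟨i₀, s₀⟩, hir⟩ := p₀
  have hir' : (i₀ : ℕ) < r := hir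
  have hi₀μ : (i₀ : ℕ) < μ := i₀.isLt
  have hs₀q : (s₀ : ℕ) < q := s₀.isLt
  set m₀ : ℕ := max (i₀ : ℕ) (s₀ : ℕ) with hm₀def
  set m₁ : ℕ := min (min μ r + (s₀ : ℕ)) (q + (i₀ : ℕ)) with hm₁def
  have hm₁a : m₁ ≤ q + (i₀ : ℕ) := min_le_right _ _
  have hm₁b : m₁ ≤ min μ r + (s₀ : ℕ) := min_le_left _ _
  have hminr : min μ r ≤ r := min_le_right _ _
  have hminμ : min μ r ≤ μ := min_le_left _ _
  set G : ℕ → ℝ := fun m => ∑ p : {p : Fin μ × Fin q // (p.1 : ℕ) < r},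
      (if (p.val.1 : ℕ) + (s₀ : ℕ) = m ∧ (p.val.2 : ℕ) + (i₀ : ℕ) = m then g p else 0)
    with hGdef
  have hsum : ∀ n, m₀ ≤ n → n < m₁ →
      ∑ m ∈ Finset.Ico m₀ m₁,
        G m * ((m + n - ((i₀ : ℕ) + (s₀ : ℕ))).choose (m - (i₀ : ℕ)) : ℝ) = 0 := by
    intro n hn₀ hn₁
    have hn₀' : (i₀ : ℕ) ≤ n ∧ (s₀ : ℕ) ≤ n := by omega
    have hjν : n - (i₀ : ℕ) < ν := by omega
    have htr : n - (s₀ : ℕ) < r := by omega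
    set cn : Fin ν × Fin r := (⟨n - (i₀ : ℕ), hjν⟩, ⟨n - (s₀ : ℕ), htr⟩) with hcn
    have hcol : ∑ p : {p : Fin μ × Fin q // (p.1 : ℕ) < r},
        g p * chosenRows q r μ ν p cn = 0 := by
      have := congrFun hg cn
      simpa using this
    rw [← hcol, hGdef]
    simp only [Finset.sum_mul]
    rw [Finset.sum_comm]
    refine Finset.sum_congr rfl fun p _ => ?_
    obtain ⟨⟨i, s⟩, hpr⟩ := p
    have hpr' : (i : ℕ) < r := hpr
    have hiμ : (i : ℕ) < μ := i.isLt
    have hsq : (s : ℕ) < q := s.isLt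
    show ∑ m ∈ Finset.Ico m₀ m₁,
        (if (i : ℕ) + (s₀ : ℕ) = m ∧ (s : ℕ) + (i₀ : ℕ) = m then g ⟨(i, s), hpr⟩ else 0)
          * ((m + n - ((i₀ : ℕ) + (s₀ : ℕ))).choose (m - (i₀ : ℕ)) : ℝ)
        = g ⟨(i, s), hpr⟩ * chosenRows q r μ ν ⟨(i, s), hpr⟩ cn
    by_cases hd : (i : ℕ) + (s₀ : ℕ) = (s : ℕ) + (i₀ : ℕ)
    · rw [Finset.sum_eq_single ((i : ℕ) + (s₀ : ℕ))]
      · rw [if_pos ⟨rfl, by omega⟩]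
        show _ = g ⟨(i, s), hpr⟩ * Ctil q r μ ν (i, s) cn
        rw [hcn]
        show _ = g ⟨(i, s), hpr⟩ *
          (if (s : ℕ) + (n - (s₀ : ℕ)) = (i : ℕ) + (n - (i₀ : ℕ))
            then ((((i : ℕ) + (n - (i₀ : ℕ))).choose (s : ℕ) : ℕ) : ℝ) else 0)
        rw [if_pos (by omega)]
        have e1 : (i : ℕ) + (s₀ : ℕ) + n - ((i₀ : ℕ) + (s₀ : ℕ)) = (i : ℕ) + (n - (i₀ : ℕ)) := by
          omega
        have e2 : (i : ℕ) + (s₀ : ℕ) - (i₀ : ℕ) = (s : ℕ) := by omega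
        rw [e1, e2]
      · intro m hm hne
        rw [if_neg (by omega), zero_mul]
      · intro habs
        exfalso
        refine habs (Finset.mem_Ico.mpr ⟨by omega, by omega⟩)
    · rw [Finset.sum_eq_zero fun m hm => by rw [if_neg (by omega), zero_mul]]
      show (0 : ℝ) = g ⟨(i, s), hpr⟩ * Ctil q r μ ν (i, s) cn
      rw [hcn]
      show (0 : ℝ) = g ⟨(i, s), hpr⟩ *
        (if (s : ℕ) + (n - (s₀ : ℕ)) = (i : ℕ) + (n - (i₀ : ℕ))
          then ((((i : ℕ) + (n - (i₀ : ℕ))).choose (s : ℕ) : ℕ) : ℝ) else 0)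
      rw [if_neg (by omega), mul_zero]
  have hGzero := key_poly (i₀ : ℕ) (s₀ : ℕ) m₁ G hsum
  have hc : (i₀ : ℕ) + (s₀ : ℕ) ∈ Finset.Ico m₀ m₁ := by
    rw [Finset.mem_Ico]
    constructor
    · omega
    · have h1 : (i₀ : ℕ) < min μ r := by omega
      omega
  have hGc : ∑ p : {p : Fin μ × Fin q // (p.1 : ℕ) < r},
      (if (p.val.1 : ℕ) + (s₀ : ℕ) = (i₀ : ℕ) + (s₀ : ℕ)
          ∧ (p.val.2 : ℕ) + (i₀ : ℕ) = (i₀ : ℕ) + (s₀ : ℕ) then g p else 0) = 0 :=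
    hGzero _ hc
  rw [Finset.sum_eq_single (⟨(i₀, s₀), hir⟩ : {p : Fin μ × Fin q // (p.1 : ℕ) < r})] at hGc
  · rwa [if_pos ⟨rfl, add_comm (s₀ : ℕ) (i₀ : ℕ)⟩] at hGc
  · intro p hp hne
    obtain ⟨⟨i, s⟩, hpr⟩ := p
    refine if_neg fun hcond => hne ?_
    obtain ⟨h1, h2⟩ := hcond
    have h1' : (i : ℕ) + (s₀ : ℕ) = (i₀ : ℕ) + (s₀ : ℕ) := h1
    have h2' : (s : ℕ) + (i₀ : ℕ) = (i₀ : ℕ) + (s₀ : ℕ) := h2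
    refine Subtype.ext (Prod.ext ?_ ?_)
    · exact Fin.ext (show (i : ℕ) = (i₀ : ℕ) by omega)
    · exact Fin.ext (show (s : ℕ) = (s₀ : ℕ) by omega)
  · intro habs
    exact absurd (Finset.mem_univ _) habs

lemma rows_in_span (q r μ ν : ℕ) (hνq : q + 1 ≤ ν) (p : Fin μ × Fin q) :
    Ctil q r μ ν p ∈ Submodule.span ℝ (Set.range (chosenRows q r μ ν)) := by
  obtain ⟨i₀, s₀⟩ := p
  by_cases hir : (i₀ : ℕ) < r
  · exact Submodule.subset_span ⟨⟨(i₀, s₀), hir⟩, rfl⟩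
  push_neg at hir
  have hi₀μ : (i₀ : ℕ) < μ := i₀.isLt
  have hs₀q : (s₀ : ℕ) < q := s₀.isLt
  classical
  set Scols : Finset (Fin ν × Fin r) :=
    Finset.univ.filter (fun c => (c.2 : ℕ) + (s₀ : ℕ) = (c.1 : ℕ) + (i₀ : ℕ)) with hScols
  set D : Finset {p : Fin μ × Fin q // (p.1 : ℕ) < r} :=
    Finset.univ.filter (fun x => (x.val.1 : ℕ) + (s₀ : ℕ) = (x.val.2 : ℕ) + (i₀ : ℕ)) with hD
  set V : Submodule ℝ (Fin ν × Fin r → ℝ) :=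
    Submodule.span ℝ ((Scols.image (fun c => Pi.single c (1 : ℝ))) :
      Set (Fin ν × Fin r → ℝ)) with hV
  have hmemV : ∀ f : Fin ν × Fin r → ℝ,
      (∀ c : Fin ν × Fin r, ¬((c.2 : ℕ) + (s₀ : ℕ) = (c.1 : ℕ) + (i₀ : ℕ)) → f c = 0) →
      f ∈ V := by
    intro f hf
    have hrepr : f = ∑ c ∈ Scols, f c • (Pi.single c 1 : Fin ν × Fin r → ℝ) := by
      funext x
      rw [Finset.sum_apply]
      by_cases hx : x ∈ Scols
      · rw [Finset.sum_eq_single x]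
        · rw [Pi.smul_apply, Pi.single_eq_same, smul_eq_mul, mul_one]
        · intro c hc hne
          rw [Pi.smul_apply, Pi.single_eq_of_ne (Ne.symm hne), smul_zero]
        · intro habs
          exact absurd hx habs
      · have hx0 : f x = 0 := by
          refine hf x fun hcond => hx ?_
          rw [hScols, Finset.mem_filter]
          exact ⟨Finset.mem_univ _, hcond⟩
        rw [hx0]
        refine (Finset.sum_eq_zero fun c hc => ?_).symm
        have hne : x ≠ c := fun h => hx (h ▸ hc)
        rw [Pi.smul_apply, Pi.single_eq_of_ne hne, smul_zero]
    rw [hrepr]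
    exact Submodule.sum_mem _ fun c hc => Submodule.smul_mem _ _
      (Submodule.subset_span (Finset.mem_coe.mpr (Finset.mem_image_of_mem _ hc)))
  set w : {x // x ∈ D} → (Fin ν × Fin r → ℝ) := fun x => chosenRows q r μ ν x.val with hw
  have hwli : LinearIndependent ℝ w :=
    (chosen_li q r μ ν hνq).comp Subtype.val Subtype.val_injective
  have hwV : Submodule.span ℝ (Set.range w) ≤ V := by
    rw [Submodule.span_le]
    rintro _ ⟨x, rfl⟩
    refine hmemV _ fun c hc => ?_
    obtain ⟨⟨⟨i, s⟩, hpr⟩, hxD⟩ := x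
    have hdiag : (i : ℕ) + (s₀ : ℕ) = (s : ℕ) + (i₀ : ℕ) := by
      have := (Finset.mem_filter.mp hxD).2
      exact this
    show Ctil q r μ ν (i, s) c = 0
    show (if (s : ℕ) + (c.2 : ℕ) = (i : ℕ) + (c.1 : ℕ)
        then ((((i : ℕ) + (c.1 : ℕ)).choose (s : ℕ) : ℕ) : ℝ) else 0) = 0
    refine if_neg fun h => hc (by omega)
  have hWfin : Module.finrank ℝ (Submodule.span ℝ (Set.range w)) = D.card := by
    rw [finrank_span_eq_card hwli, Fintype.card_coe]
  have hVle : Module.finrank ℝ V ≤ Scols.card := by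
    refine le_trans (finrank_span_finset_le_card (Scols.image (fun c => Pi.single c (1 : ℝ))))
      Finset.card_image_le
  have hcardle : Scols.card ≤ D.card := by
    rw [← Fintype.card_coe Scols, ← Fintype.card_coe D]
    have hf : ∀ x : {c // c ∈ Scols}, ((x.val.2 : ℕ) < μ) ∧ ((x.val.1 : ℕ) < q) := by
      rintro ⟨⟨j, t⟩, hx⟩
      have hcond : (t : ℕ) + (s₀ : ℕ) = (j : ℕ) + (i₀ : ℕ) := (Finset.mem_filter.mp hx).2
      have htr : (t : ℕ) < r := t.isLt
      constructor
      · show (t : ℕ) < μ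
        omega
      · show (j : ℕ) < q
        omega
    refine Fintype.card_le_of_injective (fun x =>
      ⟨⟨(⟨(x.val.2 : ℕ), (hf x).1⟩, ⟨(x.val.1 : ℕ), (hf x).2⟩), x.val.2.isLt⟩, ?_⟩) ?_
    · rw [hD, Finset.mem_filter]
      refine ⟨Finset.mem_univ _, ?_⟩
      show (x.val.2 : ℕ) + (s₀ : ℕ) = (x.val.1 : ℕ) + (i₀ : ℕ)
      exact (Finset.mem_filter.mp x.prop).2
    · rintro ⟨⟨j, t⟩, hx⟩ ⟨⟨j', t'⟩, hx'⟩ heq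
      have ht : (t : ℕ) = (t' : ℕ) := congrArg (fun y => (y.val.val.1 : ℕ)) heq
      have hj : (j : ℕ) = (j' : ℕ) := congrArg (fun y => (y.val.val.2 : ℕ)) heq
      exact Subtype.ext (Prod.ext (Fin.ext hj) (Fin.ext ht))
  have hspan_eq : Submodule.span ℝ (Set.range w) = V :=
    Submodule.eq_of_le_of_finrank_le hwV (by omega)
  have hmem : Ctil q r μ ν (i₀, s₀) ∈ V := by
    refine hmemV _ fun c hc => ?_
    show (if (s₀ : ℕ) + (c.2 : ℕ) = (i₀ : ℕ) + (c.1 : ℕ)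
        then ((((i₀ : ℕ) + (c.1 : ℕ)).choose (s₀ : ℕ) : ℕ) : ℝ) else 0) = 0
    exact if_neg fun h => hc (by omega)
  rw [← hspan_eq] at hmem
  exact Submodule.span_mono (by rintro _ ⟨x, rfl⟩; exact ⟨x.val, rfl⟩) hmem

lemma rank_Ctil (q r μ ν : ℕ) (hνq : q + 1 ≤ ν) :
    (Ctil q r μ ν).rank = q * min μ r := by
  have h1 : (Ctil q r μ ν).rank = Module.finrank ℝ
      (Submodule.span ℝ (Set.range (Ctil q r μ ν))) := by
    rw [← Matrix.rank_transpose, Matrix.rank_eq_finrank_span_cols, Matrix.col_transpose]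
    rfl
  have h2 : Submodule.span ℝ (Set.range (Ctil q r μ ν))
      = Submodule.span ℝ (Set.range (chosenRows q r μ ν)) := by
    refine le_antisymm ?_ (Submodule.span_mono ?_)
    · rw [Submodule.span_le]
      rintro _ ⟨p, rfl⟩
      exact rows_in_span q r μ ν hνq p
    · rintro _ ⟨x, rfl⟩
      exact ⟨x.val, rfl⟩
  have e : {p : Fin μ × Fin q // (p.1 : ℕ) < r} ≃ Fin (min μ r) × Fin q :=
    { toFun := fun x => (⟨(x.val.1 : ℕ), lt_min x.val.1.isLt x.prop⟩, x.val.2)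
      invFun := fun y => ⟨(⟨(y.1 : ℕ), lt_of_lt_of_le y.1.isLt (min_le_left _ _)⟩, y.2),
        lt_of_lt_of_le y.1.isLt (min_le_right _ _)⟩
      left_inv := fun x => Subtype.ext (Prod.ext (Fin.ext rfl) rfl)
      right_inv := fun y => Prod.ext (Fin.ext rfl) rfl }
  rw [h1, h2, finrank_span_eq_card (chosen_li q r μ ν hνq), Fintype.card_congr e,
    Fintype.card_prod, Fintype.card_fin, Fintype.card_fin, Nat.mul_comm]

end Aux



theorem statement15 (q r μ ν : ℕ) (hq : 0 < q) (hr : 0 < r) (hμ : 0 < μ) (hν : 0 < ν)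
    (hνq : q + 1 ≤ ν) :
    ∀ z : ℝ,
      (Ncal q r μ ν z).rank = q * min μ r ∧
      Module.finrank ℝ (LinearMap.ker (Ncal q r μ ν z).mulVecLin) = ν * r - q * min μ r ∧
      0 < ν * r - q * min μ r ∧
      ¬ Function.Injective (Ncal q r μ ν z).mulVecLin := by
  intro z
  have hrank : (Ncal q r μ ν z).rank = q * min μ r := by
    rw [rank_Ncal_eq, rank_Ctil q r μ ν hνq]
  have hlt : q * min μ r + r ≤ ν * r := by
    have h1 : q * min μ r ≤ q * r := Nat.mul_le_mul_left _ (min_le_right _ _)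
    have h2 : (q + 1) * r ≤ ν * r := Nat.mul_le_mul_right _ hνq
    have h3 : (q + 1) * r = q * r + r := by ring
    omega
  have hker : Module.finrank ℝ (LinearMap.ker (Ncal q r μ ν z).mulVecLin)
      = ν * r - q * min μ r := by
    have hadd := LinearMap.finrank_range_add_finrank_ker (Ncal q r μ ν z).mulVecLin
    have hdom : Module.finrank ℝ (Fin ν × Fin r → ℝ) = ν * r := by
      rw [Module.finrank_fintype_fun_eq_card, Fintype.card_prod, Fintype.card_fin,
        Fintype.card_fin]
    rw [hdom] at hadd
    have h3 : Module.finrank ℝ (LinearMap.range (Ncal q r μ ν z).mulVecLin)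
        = q * min μ r := hrank
    omega
  refine ⟨hrank, hker, by omega, ?_⟩
  intro hinj
  have hbot : LinearMap.ker (Ncal q r μ ν z).mulVecLin = ⊥ := LinearMap.ker_eq_bot.mpr hinj
  rw [hbot] at hker
  rw [finrank_bot ℝ (Fin ν × Fin r → ℝ)] at hker
  omega
end
end

section
/- Fix an integer k ≥ 0 with k ≤ r−1 or k ≥ q, and define H_k(z) = W̃_r(z)·D_r^{−1}·B^k·D_q^{−1}·Ũ_q(z) ∈ ℝ^{r×q}. Then H_k is a constant function of z: for every z ∈ ℝ, H_k(z) = D_r^{−1}·B^k·D_q^{−1}. -/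
open Matrix Kronecker

noncomputable section

lemma Dm_inv' (m : ℕ) : (Dm m)⁻¹ = Matrix.diagonal fun i : Fin m => ((Nat.factorial (i : ℕ) : ℝ))⁻¹ := by
  apply Matrix.inv_eq_right_inv
  rw [Dm, Matrix.diagonal_mul_diagonal,
    show (fun i : Fin m => ((Nat.factorial (i:ℕ) : ℝ)) * ((Nat.factorial (i:ℕ) : ℝ))⁻¹) = fun _ => (1:ℝ)
      from funext fun i => mul_inv_cancel₀ (Nat.cast_ne_zero.mpr (Nat.factorial_ne_zero _)),
    Matrix.diagonal_one]

lemma altsum' (n : ℕ) : ∑ t ∈ Finset.range (n+1), (-1:ℝ)^t * (n.choose t : ℝ) = if n = 0 then 1 else 0 := by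
  have h := Int.alternating_sum_range_choose (n := n)
  have h2 : ((∑ m ∈ Finset.range (n+1), (-1:ℤ)^m * (n.choose m) : ℤ) : ℝ)
      = ∑ t ∈ Finset.range (n+1), (-1:ℝ)^t * (n.choose t : ℝ) := by push_cast; rfl
  rw [← h2, h]
  split <;> simp

theorem statement17 (q r : ℕ) (hq : 0 < q) (hr : 0 < r) (k : ℕ) (hk : k ≤ r - 1 ∨ q ≤ k) :
    ∀ z : ℝ,
      Wt r z * (Dm r)⁻¹ * Bk q r k * (Dm q)⁻¹ * Ut q z = (Dm r)⁻¹ * Bk q r k * (Dm q)⁻¹ := by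
  intro z
  by_cases hqk : q ≤ k
  · have hB : Bk q r k = 0 := by
      ext i j
      simp [Bk, Nat.choose_eq_zero_of_lt (by omega : q < k + 1)]
    rw [hB]
    simp
  · push_neg at hqk
    have hkr : k < r := by rcases hk with h | h <;> omega
    set c : ℝ := (Nat.choose q (k+1) : ℝ) with hc
    ext i j
    have hRHS : ((Dm r)⁻¹ * Bk q r k * (Dm q)⁻¹) i j
        = (((i:ℕ).factorial : ℝ))⁻¹ * Bk q r k i j * (((j:ℕ).factorial : ℝ))⁻¹ := by
      rw [Dm_inv', Dm_inv', Matrix.mul_diagonal, Matrix.diagonal_mul]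
    have expand : (Wt r z * (Dm r)⁻¹ * Bk q r k * (Dm q)⁻¹ * Ut q z) i j
        = ∑ b : Fin q, ∑ a : Fin r,
            Wt r z i a * (((a:ℕ).factorial : ℝ))⁻¹ * Bk q r k a b *
              (((b:ℕ).factorial : ℝ))⁻¹ * Ut q z b j := by
      have hX : ∀ (a : Fin r) (b : Fin q), ((Dm r)⁻¹ * Bk q r k * (Dm q)⁻¹) a b
          = (((a:ℕ).factorial : ℝ))⁻¹ * Bk q r k a b * (((b:ℕ).factorial : ℝ))⁻¹ := by
        intro a b
        rw [Dm_inv', Dm_inv', Matrix.mul_diagonal, Matrix.diagonal_mul]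
      rw [show Wt r z * (Dm r)⁻¹ * Bk q r k * (Dm q)⁻¹ * Ut q z
          = Wt r z * ((Dm r)⁻¹ * Bk q r k * (Dm q)⁻¹) * Ut q z from by
        simp only [Matrix.mul_assoc]]
      rw [Matrix.mul_apply]
      refine Finset.sum_congr rfl fun b _ => ?_
      rw [Matrix.mul_apply, Finset.sum_mul]
      exact Finset.sum_congr rfl fun a _ => by rw [hX]; ring
    rw [expand, hRHS, Finset.sum_comm]
    -- Step A: collapse inner sum over b
    have stepA : ∀ a : Fin r,
        (∑ b : Fin q, Wt r z i a * (((a:ℕ).factorial : ℝ))⁻¹ * Bk q r k a b *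
            (((b:ℕ).factorial : ℝ))⁻¹ * Ut q z b j)
        = if (i:ℕ) ≤ (a:ℕ) ∧ (a:ℕ) ≤ k ∧ (j:ℕ) ≤ k - (a:ℕ) then
            (-1:ℝ)^(a:ℕ) * c * z ^ (k - (i:ℕ) - (j:ℕ)) *
              (((i:ℕ).factorial : ℝ) * ((j:ℕ).factorial : ℝ) *
                (((a:ℕ) - (i:ℕ)).factorial : ℝ) * ((k - (a:ℕ) - (j:ℕ)).factorial : ℝ))⁻¹
          else 0 := by
      intro a
      by_cases hak : (a:ℕ) ≤ k
      · set b₀ : Fin q := ⟨k - (a:ℕ), by omega⟩ with hb₀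
        rw [Finset.sum_eq_single b₀]
        · -- the single term
          have hab : (a:ℕ) + (b₀:ℕ) = k := by simp [hb₀]; omega
          simp only [Wt, Ut, Bk, Matrix.of_apply, hab, if_true]
          by_cases hia : (i:ℕ) ≤ (a:ℕ)
          · by_cases hjb : (j:ℕ) ≤ (b₀:ℕ)
            · have hjb' : (j:ℕ) ≤ k - (a:ℕ) := by simpa [hb₀] using hjb
              rw [if_pos hia, if_pos hjb, if_pos ⟨hia, hak, hjb'⟩, hc]
              show (((a:ℕ).choose (i:ℕ) : ℝ)) * z ^ ((a:ℕ) - (i:ℕ)) * (((a:ℕ).factorial : ℝ))⁻¹ *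
                  ((-1:ℝ)^(a:ℕ) * (q.choose (k+1) : ℝ)) * (((k - (a:ℕ)).factorial : ℝ))⁻¹ *
                  (((k - (a:ℕ)).choose (j:ℕ) : ℝ) * z ^ (k - (a:ℕ) - (j:ℕ))) = _
              rw [Nat.cast_choose ℝ hia, Nat.cast_choose ℝ hjb']
              have hfa : ((a:ℕ).factorial : ℝ) ≠ 0 := Nat.cast_ne_zero.mpr (Nat.factorial_ne_zero _)
              have hfi : (((i:ℕ)).factorial : ℝ) ≠ 0 := Nat.cast_ne_zero.mpr (Nat.factorial_ne_zero _)
              have hfj : (((j:ℕ)).factorial : ℝ) ≠ 0 := Nat.cast_ne_zero.mpr (Nat.factorial_ne_zero _)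
              have hfai : ((((a:ℕ) - (i:ℕ))).factorial : ℝ) ≠ 0 := Nat.cast_ne_zero.mpr (Nat.factorial_ne_zero _)
              have hfka : (((k - (a:ℕ))).factorial : ℝ) ≠ 0 := Nat.cast_ne_zero.mpr (Nat.factorial_ne_zero _)
              have hfkaj : (((k - (a:ℕ) - (j:ℕ))).factorial : ℝ) ≠ 0 := Nat.cast_ne_zero.mpr (Nat.factorial_ne_zero _)
              have hpow : z ^ ((a:ℕ) - (i:ℕ)) * z ^ (k - (a:ℕ) - (j:ℕ)) = z ^ (k - (i:ℕ) - (j:ℕ)) := by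
                rw [← pow_add]; congr 1; omega
              field_simp
              rw [← hpow]
              ring
            · rw [if_neg hjb]
              have : ¬((i:ℕ) ≤ (a:ℕ) ∧ (a:ℕ) ≤ k ∧ (j:ℕ) ≤ k - (a:ℕ)) := by
                simp only [hb₀] at hjb; push_neg; intro _ _; omega
              rw [if_neg this]; ring
          · rw [if_neg hia]
            have : ¬((i:ℕ) ≤ (a:ℕ) ∧ (a:ℕ) ≤ k ∧ (j:ℕ) ≤ k - (a:ℕ)) := by
              push_neg; intro h; exact absurd h hia
            rw [if_neg this]; ring
        · intro b _ hb
          have : ¬((a:ℕ) + (b:ℕ) = k) := by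
            intro h
            apply hb
            apply Fin.ext
            simp [hb₀]; omega
          simp [Bk, this]
        · intro h; exact absurd (Finset.mem_univ b₀) h
      · have hcond : ¬((i:ℕ) ≤ (a:ℕ) ∧ (a:ℕ) ≤ k ∧ (j:ℕ) ≤ k - (a:ℕ)) := by
          push_neg; intro _; omega
        rw [if_neg hcond]
        apply Finset.sum_eq_zero
        intro b _
        have : ¬((a:ℕ) + (b:ℕ) = k) := by omega
        simp [Bk, this]
    rw [Finset.sum_congr rfl fun a _ => stepA a]
    -- Step B
    rw [Fin.sum_univ_eq_sum_range (fun a : ℕ =>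
      if (i:ℕ) ≤ a ∧ a ≤ k ∧ (j:ℕ) ≤ k - a then
        (-1:ℝ)^a * c * z ^ (k - (i:ℕ) - (j:ℕ)) *
          (((i:ℕ).factorial : ℝ) * ((j:ℕ).factorial : ℝ) *
            ((a - (i:ℕ)).factorial : ℝ) * ((k - a - (j:ℕ)).factorial : ℝ))⁻¹
      else 0) r]
    by_cases hij : (i:ℕ) + (j:ℕ) ≤ k
    · set n := k - (i:ℕ) - (j:ℕ) with hn
      have hcongr : ∀ a ∈ Finset.range r,
          (if (i:ℕ) ≤ a ∧ a ≤ k ∧ (j:ℕ) ≤ k - a then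
            (-1:ℝ)^a * c * z ^ n *
              (((i:ℕ).factorial : ℝ) * ((j:ℕ).factorial : ℝ) *
                ((a - (i:ℕ)).factorial : ℝ) * ((k - a - (j:ℕ)).factorial : ℝ))⁻¹
          else 0)
          = (if a ∈ Finset.Ico (i:ℕ) ((i:ℕ) + n + 1) then
            (-1:ℝ)^a * c * z ^ n *
              (((i:ℕ).factorial : ℝ) * ((j:ℕ).factorial : ℝ) *
                ((a - (i:ℕ)).factorial : ℝ) * ((k - a - (j:ℕ)).factorial : ℝ))⁻¹
          else 0) := by
        intro a _
        congr 1
        simp only [Finset.mem_Ico, eq_iff_iff]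
        omega
      rw [Finset.sum_congr rfl hcongr, Finset.sum_ite_mem]
      have hinter : Finset.range r ∩ Finset.Ico (i:ℕ) ((i:ℕ) + n + 1) = Finset.Ico (i:ℕ) ((i:ℕ) + n + 1) := by
        apply Finset.inter_eq_right.mpr
        intro a ha
        simp only [Finset.mem_Ico] at ha
        simp only [Finset.mem_range]
        omega
      rw [hinter, Finset.sum_Ico_eq_sum_range]
      have hlen : (i:ℕ) + n + 1 - (i:ℕ) = n + 1 := by omega
      rw [hlen]
      have hterm : ∀ t ∈ Finset.range (n+1),
          (-1:ℝ)^((i:ℕ) + t) * c * z ^ n *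
            (((i:ℕ).factorial : ℝ) * ((j:ℕ).factorial : ℝ) *
              (((i:ℕ) + t - (i:ℕ)).factorial : ℝ) * ((k - ((i:ℕ) + t) - (j:ℕ)).factorial : ℝ))⁻¹
          = ((-1:ℝ)^(i:ℕ) * c * z ^ n *
              (((i:ℕ).factorial : ℝ) * ((j:ℕ).factorial : ℝ) * (n.factorial : ℝ))⁻¹) *
            ((-1:ℝ)^t * (n.choose t : ℝ)) := by
        intro t ht
        simp only [Finset.mem_range] at ht
        have ht' : t ≤ n := by omega
        have h1 : (i:ℕ) + t - (i:ℕ) = t := by omega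
        have h2 : k - ((i:ℕ) + t) - (j:ℕ) = n - t := by omega
        rw [h1, h2, pow_add, Nat.cast_choose ℝ ht']
        have hfn : ((n.factorial : ℕ) : ℝ) ≠ 0 := Nat.cast_ne_zero.mpr (Nat.factorial_ne_zero _)
        have hft : ((t.factorial : ℕ) : ℝ) ≠ 0 := Nat.cast_ne_zero.mpr (Nat.factorial_ne_zero _)
        have hfnt : (((n - t).factorial : ℕ) : ℝ) ≠ 0 := Nat.cast_ne_zero.mpr (Nat.factorial_ne_zero _)
        have hfi : (((i:ℕ)).factorial : ℝ) ≠ 0 := Nat.cast_ne_zero.mpr (Nat.factorial_ne_zero _)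
        have hfj : (((j:ℕ)).factorial : ℝ) ≠ 0 := Nat.cast_ne_zero.mpr (Nat.factorial_ne_zero _)
        field_simp
      rw [Finset.sum_congr rfl hterm, ← Finset.mul_sum, altsum']
      by_cases hn0 : n = 0
      · have hijk : (i:ℕ) + (j:ℕ) = k := by omega
        rw [if_pos hn0]
        simp only [Bk, Matrix.of_apply, hijk, if_true, hn0, Nat.factorial_zero]
        push_cast
        ring
      · have hijk : ¬((i:ℕ) + (j:ℕ) = k) := by omega
        rw [if_neg hn0]
        simp [Bk, hijk]
    · have hijk : ¬((i:ℕ) + (j:ℕ) = k) := by omega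
      rw [Finset.sum_eq_zero, ]
      · simp [Bk, hijk]
      · intro a _
        rw [if_neg]
        push_neg
        intro _ _
        omega
end
end

section
/- Assume r ≥ q and ν ≥ q. Then the constant matrix C = (I_ν ⊗ D_r^{−1})·𝓑^0·D_q^{−1} ∈ ℝ^{νr×q} satisfies 𝓜^0(z)·C = I_q for all z ∈ ℝ. Moreover, a constant matrix C ∈ ℝ^{νr×q} with 𝓜^0(z)·C = I_q for all z is unique if and only if ν = q. -/
open Matrix Kronecker

noncomputable section

section St18Aux

open Finset

lemma st18_iter_pow (m n : ℕ) : iteratedDeriv n (fun t : ℝ => t ^ m) = fun z => (m.descFactorial n : ℝ) * z ^ (m - n) := by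
  induction n with
  | zero => funext z; simp
  | succ n ih =>
    rw [iteratedDeriv_succ, ih]
    funext z
    rw [deriv_const_mul_field, deriv_pow_field, Nat.descFactorial_succ,
      show m - (n+1) = m - n - 1 by omega]
    push_cast
    ring

lemma st18_sum_fin_ite {n : ℕ} (m : ℕ) (t : ℕ → ℝ) :
    ∑ k : Fin n, (if (k : ℕ) = m then t (k : ℕ) else 0) = if m < n then t m else 0 := by
  split_ifs with h
  · rw [Finset.sum_eq_single ⟨m, h⟩]
    · simp
    · intro b _ hb
      have : (b : ℕ) ≠ m := fun he => hb (Fin.ext he)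
      simp [this]
    · simp
  · apply Finset.sum_eq_zero
    intro k _
    have : (k : ℕ) ≠ m := by omega
    simp [this]

lemma st18_poly_vanish {r : ℕ} (c : Fin r → ℝ)
    (h : ∀ z : ℝ, ∑ b : Fin r, c b * z ^ (b : ℕ) = 0) : ∀ b, c b = 0 := by
  set p : Polynomial ℝ := ∑ b : Fin r, Polynomial.C (c b) * Polynomial.X ^ (b : ℕ) with hp
  have hp0 : p = 0 := by
    apply Polynomial.funext
    intro z
    simp only [hp, Polynomial.eval_finset_sum, Polynomial.eval_mul, Polynomial.eval_C,
      Polynomial.eval_pow, Polynomial.eval_X, Polynomial.eval_zero]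
    exact h z
  intro b
  have : p.coeff (b : ℕ) = c b := by
    rw [hp, Polynomial.finset_sum_coeff]
    rw [Finset.sum_eq_single b]
    · simp
    · intro b' _ hb'
      have : (b : ℕ) ≠ (b' : ℕ) := fun he => hb' (Fin.ext he.symm)
      simp only [Polynomial.coeff_C_mul, Polynomial.coeff_X_pow]
      rw [if_neg this, mul_zero]
    · simp
  rw [← this, hp0, Polynomial.coeff_zero]

def st18T (q a c : ℕ) : ℤ :=
  ∑ b ∈ Finset.range q, (-1) ^ b * ((a + b).choose b : ℤ) * (q.choose (b + c + 1) : ℤ)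

lemma st18_alt_tail (q : ℕ) : ∀ d c : ℕ, c + d + 1 = q →
    ∑ b ∈ Finset.range q, (-1 : ℤ) ^ b * (q.choose (b + c + 1) : ℤ) = ((q - 1).choose c : ℤ) := by
  intro d
  induction d with
  | zero =>
    intro c hc
    subst hc
    rw [Finset.sum_eq_single 0]
    · simp
    · intro b _ hb
      rw [Nat.choose_eq_zero_of_lt (by omega), Int.natCast_zero, mul_zero]
    · simp
  | succ d ih =>
    intro c hc
    obtain ⟨q', rfl⟩ : ∃ q', q = q' + 1 := ⟨q - 1, by omega⟩
    have key := ih (c + 1) (by omega)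
    rw [Finset.sum_range_succ,
      Nat.choose_eq_zero_of_lt (show q' + 1 < q' + (c + 1) + 1 by omega)] at key
    simp only [Int.natCast_zero, mul_zero, add_zero] at key
    rw [Finset.sum_range_succ']
    have e : ∀ b ∈ Finset.range q', (-1 : ℤ) ^ (b + 1) * ((q' + 1).choose (b + 1 + c + 1) : ℤ)
        = -((-1) ^ b * ((q' + 1).choose (b + (c + 1) + 1) : ℤ)) := by
      intro b _; rw [show b + 1 + c + 1 = b + (c + 1) + 1 by omega]; ring
    rw [Finset.sum_congr rfl e, Finset.sum_neg_distrib, key]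
    have pas : ((q' + 1).choose (c + 1) : ℤ) = (q'.choose c : ℤ) + (q'.choose (c + 1) : ℤ) := by
      have := Nat.choose_succ_succ q' c
      push_cast [this]; ring
    simp only [pow_zero, one_mul, zero_add, Nat.add_sub_cancel]
    linarith [pas]

lemma st18T_rec (q' a c : ℕ) :
    st18T (q' + 1) (a + 1) c = st18T (q' + 1) a c - st18T (q' + 1) (a + 1) (c + 1) := by
  have h3 : st18T (q' + 1) (a + 1) (c + 1)
      = ∑ b ∈ Finset.range q', (-1 : ℤ) ^ b * ((a + 1 + b).choose b : ℤ)
          * ((q' + 1).choose (b + (c + 1) + 1) : ℤ) := by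
    rw [st18T, Finset.sum_range_succ,
      Nat.choose_eq_zero_of_lt (show q' + 1 < q' + (c + 1) + 1 by omega)]
    simp
  rw [st18T, st18T, h3, Finset.sum_range_succ', Finset.sum_range_succ']
  have e : ∀ b ∈ Finset.range q',
      (-1 : ℤ) ^ (b + 1) * ((a + 1 + (b + 1)).choose (b + 1) : ℤ)
          * ((q' + 1).choose (b + 1 + c + 1) : ℤ)
      = (-1 : ℤ) ^ (b + 1) * ((a + (b + 1)).choose (b + 1) : ℤ)
          * ((q' + 1).choose (b + 1 + c + 1) : ℤ)
        - (-1 : ℤ) ^ b * ((a + 1 + b).choose b : ℤ)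
          * ((q' + 1).choose (b + (c + 1) + 1) : ℤ) := by
    intro b _
    have pas : ((a + 1 + (b + 1)).choose (b + 1) : ℤ)
        = ((a + (b + 1)).choose (b + 1) : ℤ) + ((a + 1 + b).choose b : ℤ) := by
      have : a + 1 + (b + 1) = (a + b + 1) + 1 := by omega
      rw [this]
      have := Nat.choose_succ_succ (a + b + 1) b
      push_cast [this]
      rw [show a + (b + 1) = a + b + 1 by omega, show a + 1 + b = a + b + 1 by omega]
      ring
    rw [pas, show b + (c + 1) + 1 = b + 1 + c + 1 by omega]
    ring
  rw [Finset.sum_congr rfl e, Finset.sum_sub_distrib]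
  simp only [Nat.choose_zero_right, Int.natCast_one, pow_zero, one_mul, mul_one, zero_add]
  ring

lemma st18T_eq (q : ℕ) (hq : 0 < q) : ∀ a c : ℕ, a < q → c < q →
    st18T q a c = if a ≤ c then (((q - 1 - a).choose (c - a) : ℕ) : ℤ) else 0 := by
  intro a
  induction a with
  | zero =>
    intro c _ hc
    have : st18T q 0 c = ∑ b ∈ Finset.range q, (-1 : ℤ) ^ b * (q.choose (b + c + 1) : ℤ) := by
      rw [st18T]
      apply Finset.sum_congr rfl
      intro b _
      rw [Nat.zero_add, Nat.choose_self, Int.natCast_one, mul_one]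
    rw [this, st18_alt_tail q (q - 1 - c) c (by omega)]
    simp
  | succ a ih =>
    -- downward induction on c via d with c + d + 1 = q
    suffices h : ∀ d c : ℕ, c + d + 1 = q → a + 1 < q →
        st18T q (a + 1) c = if a + 1 ≤ c then (((q - 1 - (a + 1)).choose (c - (a + 1)) : ℕ) : ℤ) else 0 by
      intro c ha hc; exact h (q - 1 - c) c (by omega) ha
    intro d
    induction d with
    | zero =>
      intro c hc ha
      -- c = q - 1
      rw [st18T, Finset.sum_eq_single 0]
      · rw [if_pos (by omega)]
        simp only [Nat.add_zero, Nat.choose_zero_right, pow_zero, one_mul, Int.natCast_one,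
          zero_add]
        rw [show c + 1 = q by omega, Nat.choose_self, show c - (a+1) = q - 1 - (a+1) by omega,
          Nat.choose_self]
      · intro b _ hb
        rw [Nat.choose_eq_zero_of_lt (show q < b + c + 1 by omega), Int.natCast_zero, mul_zero]
      · intro h0
        simp only [Finset.mem_range] at h0
        omega
    | succ d ihd =>
      intro c hc ha
      obtain ⟨q', rfl⟩ : ∃ q', q = q' + 1 := ⟨q - 1, by omega⟩
      rw [st18T_rec, ihd (c + 1) (by omega) ha, ih c (by omega) (by omega)]
      rcases Nat.lt_trichotomy a c with h1 | h1 | h1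
      · rw [if_pos (by omega), if_pos (by omega)]
        by_cases h2 : a + 1 ≤ c
        · rw [if_pos h2]
          have e1 : q' + 1 - 1 - a = q' - (a + 1) + 1 := by omega
          have e2 : c - a = c - (a + 1) + 1 := by omega
          have e3 : c + 1 - (a + 1) = c - (a + 1) + 1 := by omega
          have e4 : q' + 1 - 1 - (a + 1) = q' - (a + 1) := by omega
          rw [e1, e2, e3, e4]
          have pasN : (q' - (a + 1) + 1).choose (c - (a + 1) + 1)
              = (q' - (a + 1)).choose (c - (a + 1)) + (q' - (a + 1)).choose (c - (a + 1) + 1) :=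
            Nat.choose_succ_succ _ _
          push_cast [pasN]
          ring
        · -- c = a + ... a < c and ¬ a+1 ≤ c impossible
          omega
      · -- a = c
        subst h1
        rw [if_pos le_rfl, if_pos (by omega), if_neg (by omega)]
        rw [show a - a = 0 by omega, show a + 1 - (a + 1) = 0 by omega]
        simp
      · rw [if_neg (by omega), if_neg (by omega), if_neg (by omega)]
        ring

lemma st18_key (q a c : ℕ) (ha : a < q) (hc : c ≤ a) :
    ∑ b ∈ Finset.range q, (-1 : ℝ) ^ b * ((a + b).choose b : ℝ) * (q.choose (b + c + 1) : ℝ)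
      = if a = c then 1 else 0 := by
  have h := st18T_eq q (by omega) a c ha (by omega)
  have hcast : ((st18T q a c : ℤ) : ℝ)
      = ∑ b ∈ Finset.range q, (-1 : ℝ) ^ b * ((a + b).choose b : ℝ) * (q.choose (b + c + 1) : ℝ) := by
    rw [st18T]
    push_cast
    rfl
  rw [← hcast, h]
  by_cases h1 : a = c
  · subst h1
    rw [if_pos le_rfl, if_pos rfl, Nat.sub_self, Nat.choose_zero_right]
    simp
  · rw [if_neg (by omega), if_neg h1]
    simp

lemma st18_desc_vdm (A b k : ℕ) :
    ∑ i ∈ Finset.range (A + 1),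
        A.descFactorial i * (if i ≤ k then k.choose i * b.descFactorial (k - i) else 0)
      = (A + b).descFactorial k := by
  rw [Nat.descFactorial_eq_factorial_mul_choose (A + b) k, Nat.add_choose_eq A b k,
    Finset.Nat.sum_antidiagonal_eq_sum_range_succ_mk, Finset.mul_sum]
  have e1 : ∀ i ∈ Finset.range (k + 1),
      k.factorial * (A.choose i * b.choose (k - i))
        = A.descFactorial i * (if i ≤ k then k.choose i * b.descFactorial (k - i) else 0) := by
    intro i hi
    rw [Finset.mem_range] at hi
    rw [if_pos (by omega)]
    rw [Nat.descFactorial_eq_factorial_mul_choose A i,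
      Nat.descFactorial_eq_factorial_mul_choose b (k - i),
      ← Nat.choose_mul_factorial_mul_factorial (show i ≤ k by omega)]
    ring
  rw [Finset.sum_congr rfl e1]
  -- both sums extend to range (A + k + 1); extra terms vanish
  have key : ∀ N : ℕ, k + 1 ≤ N → A + 1 ≤ N →
      (∑ i ∈ Finset.range N,
        A.descFactorial i * (if i ≤ k then k.choose i * b.descFactorial (k - i) else 0))
      = ∑ i ∈ Finset.range (k + 1),
          A.descFactorial i * (if i ≤ k then k.choose i * b.descFactorial (k - i) else 0) := by
    intro N h1 h2
    rw [Finset.sum_subset (Finset.range_subset_range.2 h1)]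
    intro x hx hx2
    rw [Finset.mem_range] at hx
    rw [Finset.mem_range, not_lt] at hx2
    rw [if_neg (by omega), mul_zero]
  rw [← key (A + k + 1) (by omega) (by omega)]
  rw [Finset.sum_subset (Finset.range_subset_range.2 (show A + 1 ≤ A + k + 1 by omega))]
  intro x hx hx2
  rw [Finset.mem_range] at hx
  rw [Finset.mem_range, not_lt] at hx2
  rw [Nat.descFactorial_eq_zero_iff_lt.2 (by omega), zero_mul]

lemma st18_Cmat_apply (q r ν : ℕ) (p : Fin ν × Fin r) (c : Fin q) :
    (((1 : Matrix (Fin ν) (Fin ν) ℝ) ⊗ₖ (Dm r)⁻¹) * B0cal q r ν * (Dm q)⁻¹) p c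
      = if (p.2 : ℕ) + (c : ℕ) = (p.1 : ℕ) then
          (-1 : ℝ) ^ (p.2 : ℕ) * (q.choose ((p.1 : ℕ) + 1) : ℝ)
            * ((((p.2 : ℕ).factorial : ℝ))⁻¹ * (((c : ℕ).factorial : ℝ))⁻¹)
        else 0 := by
  have hDq : (Dm q)⁻¹ = Matrix.diagonal fun i : Fin q => (((i : ℕ).factorial : ℝ))⁻¹ := by
    apply Matrix.inv_eq_right_inv
    rw [Dm, Matrix.diagonal_mul_diagonal]
    have e : (fun i : Fin q => ((i : ℕ).factorial : ℝ) * (((i : ℕ).factorial : ℝ))⁻¹)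
        = fun _ => (1 : ℝ) := by
      funext i
      exact mul_inv_cancel₀ (Nat.cast_ne_zero.mpr (Nat.factorial_ne_zero (i : ℕ)))
    rw [e, Matrix.diagonal_one]
  have hDr : (Dm r)⁻¹ = Matrix.diagonal fun i : Fin r => (((i : ℕ).factorial : ℝ))⁻¹ := by
    apply Matrix.inv_eq_right_inv
    rw [Dm, Matrix.diagonal_mul_diagonal]
    have e : (fun i : Fin r => ((i : ℕ).factorial : ℝ) * (((i : ℕ).factorial : ℝ))⁻¹)
        = fun _ => (1 : ℝ) := by
      funext i
      exact mul_inv_cancel₀ (Nat.cast_ne_zero.mpr (Nat.factorial_ne_zero (i : ℕ)))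
    rw [e, Matrix.diagonal_one]
  have hK : ((1 : Matrix (Fin ν) (Fin ν) ℝ) ⊗ₖ (Dm r)⁻¹)
      = Matrix.diagonal (fun p : Fin ν × Fin r => (((p.2 : ℕ).factorial : ℝ))⁻¹) := by
    rw [hDr, ← Matrix.diagonal_one, Matrix.diagonal_kronecker_diagonal]
    congr 1
    funext p
    simp
  rw [hDq, Matrix.mul_diagonal, hK, Matrix.diagonal_mul]
  show (((p.2 : ℕ).factorial : ℝ))⁻¹ * Bk q r (p.1 : ℕ) p.2 c * (((c : ℕ).factorial : ℝ))⁻¹ = _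
  rw [Bk]
  show (((p.2 : ℕ).factorial : ℝ))⁻¹
      * (if (p.2 : ℕ) + (c : ℕ) = (p.1 : ℕ) then
          (-1 : ℝ) ^ (p.2 : ℕ) * (q.choose ((p.1 : ℕ) + 1) : ℝ) else 0)
      * (((c : ℕ).factorial : ℝ))⁻¹ = _
  split_ifs with h
  · ring
  · ring

lemma st18_M0cal_apply (q r ν : ℕ) (z : ℝ) (a : Fin q) (p : Fin ν × Fin r) :
    M0cal q r ν z a p
      = ((((a : ℕ) + (p.2 : ℕ)).descFactorial (p.1 : ℕ) : ℕ) : ℝ)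
          * z ^ ((a : ℕ) + (p.2 : ℕ) - (p.1 : ℕ)) := by
  show Md q r (p.1 : ℕ) z a p.2 = _
  show iteratedDeriv (p.1 : ℕ) (fun t : ℝ => t ^ ((a : ℕ) + (p.2 : ℕ))) z = _
  rw [st18_iter_pow]

lemma st18_part1 (q r ν : ℕ) (hq : 0 < q) (hrq : q ≤ r) (hνq : q ≤ ν) (z : ℝ) :
    M0cal q r ν z
        * (((1 : Matrix (Fin ν) (Fin ν) ℝ) ⊗ₖ (Dm r)⁻¹) * B0cal q r ν * (Dm q)⁻¹) = 1 := by
  ext a c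
  rw [Matrix.mul_apply]
  set G : ℕ → ℝ := fun b =>
    ((((a : ℕ) + b).descFactorial (b + (c : ℕ)) : ℕ) : ℝ) * z ^ ((a : ℕ) + b - (b + (c : ℕ)))
      * ((-1 : ℝ) ^ b * (q.choose (b + (c : ℕ) + 1) : ℝ)
          * ((b.factorial : ℝ)⁻¹ * (((c : ℕ).factorial : ℝ))⁻¹)) with hG
  have hGz : ∀ b : ℕ, q < b + (c : ℕ) + 1 → G b = 0 := by
    intro b hb
    rw [hG]
    simp only
    rw [Nat.choose_eq_zero_of_lt hb]
    push_cast
    ring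
  have step1 : ∀ b : Fin r,
      (∑ k : Fin ν, M0cal q r ν z a (k, b)
        * ((((1 : Matrix (Fin ν) (Fin ν) ℝ) ⊗ₖ (Dm r)⁻¹) * B0cal q r ν * (Dm q)⁻¹) (k, b) c))
      = G (b : ℕ) := by
    intro b
    have e1 : ∀ k : Fin ν,
        M0cal q r ν z a (k, b)
          * ((((1 : Matrix (Fin ν) (Fin ν) ℝ) ⊗ₖ (Dm r)⁻¹) * B0cal q r ν * (Dm q)⁻¹) (k, b) c)
        = if (k : ℕ) = (b : ℕ) + (c : ℕ) then
            (((((a : ℕ) + (b : ℕ)).descFactorial ((k : ℕ)) : ℕ) : ℝ)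
              * z ^ ((a : ℕ) + (b : ℕ) - (k : ℕ)))
            * ((-1 : ℝ) ^ (b : ℕ) * (q.choose ((k : ℕ) + 1) : ℝ)
              * (((b : ℕ).factorial : ℝ)⁻¹ * (((c : ℕ).factorial : ℝ))⁻¹))
          else 0 := by
      intro k
      rw [st18_M0cal_apply, st18_Cmat_apply]
      by_cases h : (b : ℕ) + (c : ℕ) = (k : ℕ)
      · rw [if_pos h, if_pos h.symm]
      · rw [if_neg h, if_neg (fun h2 => h h2.symm), mul_zero]
    rw [Finset.sum_congr rfl (fun k _ => e1 k)]
    rw [st18_sum_fin_ite ((b : ℕ) + (c : ℕ)) (fun n =>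
      (((((a : ℕ) + (b : ℕ)).descFactorial n : ℕ) : ℝ) * z ^ ((a : ℕ) + (b : ℕ) - n))
        * ((-1 : ℝ) ^ (b : ℕ) * (q.choose (n + 1) : ℝ)
          * (((b : ℕ).factorial : ℝ)⁻¹ * (((c : ℕ).factorial : ℝ))⁻¹)))]
    by_cases h : (b : ℕ) + (c : ℕ) < ν
    · rw [if_pos h]
    · rw [if_neg h]
      exact (hGz (b : ℕ) (by omega)).symm
  rw [Fintype.sum_prod_type, Finset.sum_comm]
  have step2 : ∀ b : Fin r, ∀ x ∈ Finset.range ν, True := fun _ _ _ => trivial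
  rw [Finset.sum_congr rfl (fun b _ => by
    rw [show (∑ k : Fin ν, M0cal q r ν z a (k, b)
      * ((((1 : Matrix (Fin ν) (Fin ν) ℝ) ⊗ₖ (Dm r)⁻¹) * B0cal q r ν * (Dm q)⁻¹) (k, b) c))
      = G (b : ℕ) from step1 b])]
  rw [Fin.sum_univ_eq_sum_range G r]
  rw [← Finset.sum_subset (Finset.range_subset_range.2 hrq)
    (fun x _ hx => hGz x (by rw [Finset.mem_range, not_lt] at hx; omega))]
  by_cases hca : (c : ℕ) ≤ (a : ℕ)
  · have hterm : ∀ i : ℕ, G i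
        = ((-1 : ℝ) ^ i * ((((a : ℕ) + i).choose i : ℕ) : ℝ) * (q.choose (i + (c : ℕ) + 1) : ℝ))
          * (z ^ ((a : ℕ) - (c : ℕ)) * (((a : ℕ).descFactorial (c : ℕ) : ℕ) : ℝ)
            * (((c : ℕ).factorial : ℝ))⁻¹) := by
      intro i
      have hnat : ((a : ℕ) + i).descFactorial (i + (c : ℕ))
          = ((a : ℕ) + i).choose i * (a : ℕ).descFactorial (c : ℕ) * i.factorial := by
        apply Nat.eq_of_mul_eq_mul_right (Nat.factorial_pos ((a : ℕ) - (c : ℕ)))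
        have l1 : ((a : ℕ) + i).descFactorial (i + (c : ℕ)) * ((a : ℕ) - (c : ℕ)).factorial
            = ((a : ℕ) + i).factorial := by
          rw [mul_comm, show (a : ℕ) - (c : ℕ) = (a : ℕ) + i - (i + (c : ℕ)) by omega]
          exact Nat.factorial_mul_descFactorial (by omega)
        have l2 : (a : ℕ).descFactorial (c : ℕ) * ((a : ℕ) - (c : ℕ)).factorial
            = (a : ℕ).factorial := by
          rw [mul_comm]
          exact Nat.factorial_mul_descFactorial (by omega)
        have l3 : ((a : ℕ) + i).choose i * i.factorial * (a : ℕ).factorial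
            = ((a : ℕ) + i).factorial := by
          have := Nat.choose_mul_factorial_mul_factorial (show i ≤ (a : ℕ) + i by omega)
          rw [show (a : ℕ) + i - i = (a : ℕ) by omega] at this
          exact this
        calc ((a : ℕ) + i).descFactorial (i + (c : ℕ)) * ((a : ℕ) - (c : ℕ)).factorial
            = ((a : ℕ) + i).factorial := l1
          _ = ((a : ℕ) + i).choose i * i.factorial * (a : ℕ).factorial := l3.symm
          _ = ((a : ℕ) + i).choose i * i.factorial
                * ((a : ℕ).descFactorial (c : ℕ) * ((a : ℕ) - (c : ℕ)).factorial) := by rw [l2]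
          _ = ((a : ℕ) + i).choose i * (a : ℕ).descFactorial (c : ℕ) * i.factorial
                * ((a : ℕ) - (c : ℕ)).factorial := by ring
      rw [hG]
      simp only
      rw [hnat, show (a : ℕ) + i - (i + (c : ℕ)) = (a : ℕ) - (c : ℕ) by omega]
      push_cast
      field_simp
    rw [Finset.sum_congr rfl (fun i _ => hterm i), ← Finset.sum_mul, st18_key q (a : ℕ) (c : ℕ)
      a.isLt hca]
    by_cases hac : a = c
    · subst hac
      rw [if_pos rfl, Matrix.one_apply_eq, Nat.sub_self, pow_zero, Nat.descFactorial_self]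
      rw [one_mul, one_mul]
      exact mul_inv_cancel₀ (by exact_mod_cast Nat.factorial_ne_zero (a : ℕ))
    · rw [if_neg (fun h => hac (Fin.ext h)), Matrix.one_apply_ne hac, zero_mul]
  · -- c > a : every term vanishes
    rw [Finset.sum_eq_zero, Matrix.one_apply_ne (fun h => hca (le_of_eq (congrArg _ h).symm))]
    intro i _
    rw [hG]
    simp only
    rw [Nat.descFactorial_eq_zero_iff_lt.2 (by omega)]
    push_cast
    ring

lemma st18_leib (A b k : ℕ) (z : ℝ) :
    (((A + b).descFactorial k : ℕ) : ℝ) * z ^ (A + b - k)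
      = ∑ i ∈ Finset.range (A + 1), ((A.descFactorial i : ℕ) : ℝ) * z ^ (A - i)
          * (if i ≤ k then ((k.choose i : ℕ) : ℝ) * ((b.descFactorial (k - i) : ℕ) : ℝ)
              * z ^ (b - (k - i)) else 0) := by
  have e : ∀ i ∈ Finset.range (A + 1),
      ((A.descFactorial i : ℕ) : ℝ) * z ^ (A - i)
          * (if i ≤ k then ((k.choose i : ℕ) : ℝ) * ((b.descFactorial (k - i) : ℕ) : ℝ)
              * z ^ (b - (k - i)) else 0)
        = ((A.descFactorial i * (if i ≤ k then k.choose i * b.descFactorial (k - i) else 0) : ℕ) : ℝ)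
            * z ^ (A + b - k) := by
    intro i _
    by_cases hik : i ≤ k
    · by_cases hiA : i ≤ A
      · by_cases hkb : k - i ≤ b
        · rw [if_pos hik, if_pos hik]
          push_cast
          rw [show z ^ (A + b - k) = z ^ (A - i) * z ^ (b - (k - i)) by
            rw [← pow_add]; congr 1; omega]
          ring
        · rw [if_pos hik, if_pos hik,
            Nat.descFactorial_eq_zero_iff_lt.2 (show b < k - i by omega)]
          push_cast
          ring
      · rw [Nat.descFactorial_eq_zero_iff_lt.2 (show A < i by omega)]
        push_cast
        ring
    · rw [if_neg hik, if_neg hik]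
      push_cast
      ring
  rw [Finset.sum_congr rfl e, ← Finset.sum_mul, ← Nat.cast_sum, st18_desc_vdm]

lemma st18_inj (q r : ℕ) (hq : 0 < q) (hrq : q ≤ r) (X : Matrix (Fin q × Fin r) (Fin q) ℝ)
    (hX : ∀ z : ℝ, M0cal q r q z * X = 0) : X = 0 := by
  have H : ∀ (z : ℝ) (a j : Fin q),
      ∑ p : Fin q × Fin r, ((((a : ℕ) + (p.2 : ℕ)).descFactorial (p.1 : ℕ) : ℕ) : ℝ)
        * z ^ ((a : ℕ) + (p.2 : ℕ) - (p.1 : ℕ)) * X p j = 0 := by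
    intro z a j
    have h2 : (M0cal q r q z * X) a j = 0 := by rw [hX z]; rfl
    rw [Matrix.mul_apply] at h2
    rw [← h2]
    apply Finset.sum_congr rfl
    intro p _
    rw [st18_M0cal_apply]
  have claimA : ∀ i : ℕ, i < q → ∀ (z : ℝ) (j : Fin q),
      ∑ p : Fin q × Fin r, (if i ≤ (p.1 : ℕ) then (((p.1 : ℕ).choose i : ℕ) : ℝ)
          * (((p.2 : ℕ).descFactorial ((p.1 : ℕ) - i) : ℕ) : ℝ)
          * z ^ ((p.2 : ℕ) - ((p.1 : ℕ) - i)) else 0) * X p j = 0 := by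
    intro i
    induction i using Nat.strong_induction_on with
    | _ i ih =>
      intro hi z j
      have h0 := H z ⟨i, hi⟩ j
      have h2 : ∀ p : Fin q × Fin r,
          ((((i : ℕ) + (p.2 : ℕ)).descFactorial (p.1 : ℕ) : ℕ) : ℝ)
              * z ^ ((i : ℕ) + (p.2 : ℕ) - (p.1 : ℕ))
            = ∑ i' ∈ Finset.range (i + 1), ((i.descFactorial i' : ℕ) : ℝ) * z ^ (i - i')
              * (if i' ≤ (p.1 : ℕ) then (((p.1 : ℕ).choose i' : ℕ) : ℝ)
                  * (((p.2 : ℕ).descFactorial ((p.1 : ℕ) - i') : ℕ) : ℝ)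
                  * z ^ ((p.2 : ℕ) - ((p.1 : ℕ) - i')) else 0) :=
        fun p => st18_leib i (p.2 : ℕ) (p.1 : ℕ) z
      rw [Finset.sum_congr rfl (fun p _ => by rw [show ((⟨i, hi⟩ : Fin q) : ℕ) = i from rfl,
        h2 p, Finset.sum_mul])] at h0
      rw [Finset.sum_comm] at h0
      have h3 : ∀ i' : ℕ,
          (∑ p : Fin q × Fin r, ((i.descFactorial i' : ℕ) : ℝ) * z ^ (i - i')
            * (if i' ≤ (p.1 : ℕ) then (((p.1 : ℕ).choose i' : ℕ) : ℝ)
                * (((p.2 : ℕ).descFactorial ((p.1 : ℕ) - i') : ℕ) : ℝ)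
                * z ^ ((p.2 : ℕ) - ((p.1 : ℕ) - i')) else 0) * X p j)
          = ((i.descFactorial i' : ℕ) : ℝ) * z ^ (i - i')
            * ∑ p : Fin q × Fin r, (if i' ≤ (p.1 : ℕ) then (((p.1 : ℕ).choose i' : ℕ) : ℝ)
                * (((p.2 : ℕ).descFactorial ((p.1 : ℕ) - i') : ℕ) : ℝ)
                * z ^ ((p.2 : ℕ) - ((p.1 : ℕ) - i')) else 0) * X p j := by
        intro i'
        rw [Finset.mul_sum]
        apply Finset.sum_congr rfl
        intro p _
        ring
      rw [Finset.sum_congr rfl (fun i' _ => h3 i'), Finset.sum_range_succ] at h0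
      rw [Finset.sum_eq_zero (fun i' hi' => by
        rw [ih i' (Finset.mem_range.1 hi') (by have := Finset.mem_range.1 hi'; omega) z j,
          mul_zero]), zero_add, Nat.descFactorial_self, Nat.sub_self, pow_zero, mul_one] at h0
      exact (mul_eq_zero.1 h0).resolve_left
        (Nat.cast_ne_zero.mpr (Nat.factorial_ne_zero i))
  have claimB : ∀ m : ℕ, ∀ k : Fin q, (k : ℕ) + m + 1 = q →
      ∀ (b : Fin r) (j : Fin q), X (k, b) j = 0 := by
    intro m
    induction m using Nat.strong_induction_on with
    | _ m ih =>
      intro k hk b j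
      have hzero : ∀ z : ℝ, ∑ b' : Fin r, X (k, b') j * z ^ (b' : ℕ) = 0 := by
        intro z
        have h0 := claimA (k : ℕ) k.isLt z j
        rw [Fintype.sum_prod_type] at h0
        have hrest : ∀ k' : Fin q, k' ≠ k →
            (∑ b' : Fin r, (if (k : ℕ) ≤ (k' : ℕ) then (((k' : ℕ).choose (k : ℕ) : ℕ) : ℝ)
              * (((b' : ℕ).descFactorial ((k' : ℕ) - (k : ℕ)) : ℕ) : ℝ)
              * z ^ ((b' : ℕ) - ((k' : ℕ) - (k : ℕ))) else 0) * X (k', b') j) = 0 := by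
          intro k' hk'
          have hne : (k' : ℕ) ≠ (k : ℕ) := fun h => hk' (Fin.ext h)
          rcases lt_or_gt_of_ne hne with hlt | hgt
          · apply Finset.sum_eq_zero
            intro b' _
            rw [if_neg (by omega), zero_mul]
          · apply Finset.sum_eq_zero
            intro b' _
            have hk'lt := k'.isLt
            rw [ih (q - 1 - (k' : ℕ)) (by omega) k' (by omega) b' j, mul_zero]
        rw [Fintype.sum_eq_single k hrest] at h0
        rw [← h0]
        apply Finset.sum_congr rfl
        intro b' _
        rw [if_pos (le_refl (k : ℕ)), Nat.sub_self, Nat.choose_self, Nat.descFactorial_zero,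
          Nat.sub_zero]
        push_cast
        ring
      exact st18_poly_vanish (fun b' => X (k, b') j) hzero b
  ext p j
  exact claimB (q - 1 - (p.1 : ℕ)) p.1 (by have := p.1.isLt; omega) p.2 j

lemma st18_ker (q r ν : ℕ) (hq : 0 < q) (hrq : q ≤ r) (hν : q < ν) :
    ∃ X : Matrix (Fin ν × Fin r) (Fin q) ℝ, X ≠ 0 ∧ ∀ z : ℝ, M0cal q r ν z * X = 0 := by
  set N : Matrix (Fin (q - 1)) (Fin q) ℝ :=
    Matrix.of (fun a k => ((((a : ℕ) + (k : ℕ) + 1).descFactorial ((k : ℕ) + 1) : ℕ) : ℝ))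
    with hNdef
  have hnotinj : ¬ Function.Injective N.mulVecLin := by
    intro hinj
    have hle := LinearMap.finrank_le_finrank_of_injective hinj
    rw [Module.finrank_fin_fun, Module.finrank_fin_fun] at hle
    omega
  obtain ⟨x, y, hxy, hne⟩ := Function.not_injective_iff.1 hnotinj
  set t : Fin q → ℝ := x - y with ht
  have ht0 : t ≠ 0 := sub_ne_zero.mpr hne
  have hNt : N.mulVec t = 0 := by
    have : N.mulVecLin t = 0 := by
      rw [ht, map_sub, hxy, sub_self]
    rwa [Matrix.mulVecLin_apply] at this
  set T : ℕ → ℝ := fun n => if h : n < q then t ⟨n, h⟩ else 0 with hT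
  refine ⟨Matrix.of (fun p j =>
    if ((p.1 : ℕ) = (p.2 : ℕ) + 1 ∧ (j : ℕ) = 0) then T (p.2 : ℕ) else 0), ?_, ?_⟩
  · intro hcon
    obtain ⟨k0, hk0⟩ := Function.ne_iff.1 ht0
    have h1 := congrFun (congrFun hcon
      ((⟨(k0 : ℕ) + 1, by have := k0.isLt; omega⟩ : Fin ν),
       (⟨(k0 : ℕ), by have := k0.isLt; omega⟩ : Fin r))) (⟨0, hq⟩ : Fin q)
    rw [Matrix.zero_apply, Matrix.of_apply, if_pos (show _ ∧ _ from ⟨rfl, rfl⟩)] at h1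
    simp only [hT] at h1
    rw [dif_pos k0.isLt] at h1
    exact hk0 (by simpa using h1)
  · intro z
    ext a j
    rw [Matrix.mul_apply, Matrix.zero_apply]
    by_cases hj : (j : ℕ) = 0
    · have step1 : ∀ b : Fin r,
          (∑ k : Fin ν, M0cal q r ν z a (k, b) * Matrix.of (fun p (j' : Fin q) =>
            if ((p.1 : ℕ) = (p.2 : ℕ) + 1 ∧ (j' : ℕ) = 0) then T (p.2 : ℕ) else 0) (k, b) j)
          = (((a : ℕ) + (b : ℕ)).descFactorial ((b : ℕ) + 1) : ℝ)
              * z ^ ((a : ℕ) + (b : ℕ) - ((b : ℕ) + 1)) * T (b : ℕ) := by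
        intro b
        have e1 : ∀ k : Fin ν,
            M0cal q r ν z a (k, b) * Matrix.of (fun p (j' : Fin q) =>
              if ((p.1 : ℕ) = (p.2 : ℕ) + 1 ∧ (j' : ℕ) = 0) then T (p.2 : ℕ) else 0) (k, b) j
            = if (k : ℕ) = (b : ℕ) + 1 then
                (((a : ℕ) + (b : ℕ)).descFactorial (k : ℕ) : ℝ)
                  * z ^ ((a : ℕ) + (b : ℕ) - (k : ℕ)) * T (b : ℕ)
              else 0 := by
          intro k
          rw [st18_M0cal_apply]
          show _ * (if ((k : ℕ) = (b : ℕ) + 1 ∧ (j : ℕ) = 0) then T (b : ℕ) else 0) = _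
          by_cases h : (k : ℕ) = (b : ℕ) + 1
          · rw [if_pos ⟨h, hj⟩, if_pos h]
          · rw [if_neg (fun hc => h hc.1), if_neg h, mul_zero]
        rw [Finset.sum_congr rfl (fun k _ => e1 k)]
        rw [st18_sum_fin_ite ((b : ℕ) + 1) (fun n =>
          (((a : ℕ) + (b : ℕ)).descFactorial n : ℝ) * z ^ ((a : ℕ) + (b : ℕ) - n) * T (b : ℕ))]
        by_cases h : (b : ℕ) + 1 < ν
        · rw [if_pos h]
        · rw [if_neg h, hT]
          simp only
          rw [dif_neg (by omega)]
          rw [mul_zero]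
      rw [Fintype.sum_prod_type, Finset.sum_comm,
        Finset.sum_congr rfl (fun b _ => step1 b),
        Fin.sum_univ_eq_sum_range (fun b => (((a : ℕ) + b).descFactorial (b + 1) : ℝ)
          * z ^ ((a : ℕ) + b - (b + 1)) * T b) r]
      rw [← Finset.sum_subset (Finset.range_subset_range.2 hrq) (fun b _ hb => by
        rw [hT]
        simp only
        rw [dif_neg (by rw [Finset.mem_range, not_lt] at hb; omega), mul_zero])]
      by_cases ha : (a : ℕ) = 0
      · apply Finset.sum_eq_zero
        intro b _
        rw [ha, Nat.descFactorial_eq_zero_iff_lt.2 (by omega)]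
        push_cast
        ring
      · rw [← Fin.sum_univ_eq_sum_range (fun b => (((a : ℕ) + b).descFactorial (b + 1) : ℝ)
          * z ^ ((a : ℕ) + b - (b + 1)) * T b) q]
        have hval : ∀ b : Fin q,
            (((a : ℕ) + (b : ℕ)).descFactorial ((b : ℕ) + 1) : ℝ)
              * z ^ ((a : ℕ) + (b : ℕ) - ((b : ℕ) + 1)) * T (b : ℕ)
            = z ^ ((a : ℕ) - 1) * (N (⟨(a : ℕ) - 1, by have := a.isLt; omega⟩ : Fin (q - 1)) b
                * t b) := by
          intro b
          rw [hT]
          simp only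
          rw [dif_pos b.isLt, show ((⟨(b : ℕ), b.isLt⟩ : Fin q)) = b from Fin.ext rfl]
          rw [hNdef]
          show _ = z ^ ((a : ℕ) - 1)
            * ((((((a : ℕ) - 1) + (b : ℕ) + 1).descFactorial ((b : ℕ) + 1) : ℕ) : ℝ) * t b)
          rw [show (a : ℕ) - 1 + (b : ℕ) + 1 = (a : ℕ) + (b : ℕ) by omega,
            show (a : ℕ) + (b : ℕ) - ((b : ℕ) + 1) = (a : ℕ) - 1 by omega]
          ring
        rw [Finset.sum_congr rfl (fun b _ => hval b), ← Finset.mul_sum]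
        have : ∑ b : Fin q, N (⟨(a : ℕ) - 1, by have := a.isLt; omega⟩ : Fin (q - 1)) b * t b
            = 0 := by
          have := congrFun hNt (⟨(a : ℕ) - 1, by have := a.isLt; omega⟩ : Fin (q - 1))
          simpa [Matrix.mulVec, dotProduct] using this
        rw [this, mul_zero]
    · apply Finset.sum_eq_zero
      intro p _
      show M0cal q r ν z a p * (if ((p.1 : ℕ) = (p.2 : ℕ) + 1 ∧ (j : ℕ) = 0) then T (p.2 : ℕ)
        else 0) = 0
      rw [if_neg (fun hc => hj hc.2), mul_zero]

end St18Aux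

theorem statement18 (q r ν : ℕ) (hq : 0 < q) (hr : 0 < r) (hν : 0 < ν)
    (hrq : q ≤ r) (hνq : q ≤ ν) :
    (∀ z : ℝ,
      M0cal q r ν z *
        (((1 : Matrix (Fin ν) (Fin ν) ℝ) ⊗ₖ (Dm r)⁻¹) * B0cal q r ν * (Dm q)⁻¹) = 1) ∧
    ((∃! C : Matrix (Fin ν × Fin r) (Fin q) ℝ, ∀ z : ℝ, M0cal q r ν z * C = 1) ↔ ν = q) := by
  constructor
  · exact fun z => st18_part1 q r ν hq hrq hνq z
  constructor
  · intro hEx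
    by_contra hne
    have hlt : q < ν := lt_of_le_of_ne hνq (fun h => hne h.symm)
    obtain ⟨X, hX0, hXz⟩ := st18_ker q r ν hq hrq hlt
    obtain ⟨C, hC, huniq⟩ := hEx
    have h1 : ∀ z : ℝ, M0cal q r ν z * (C + X) = 1 := by
      intro z
      rw [Matrix.mul_add, hC z, hXz z, add_zero]
    have h2 : C + X = C := (huniq (C + X) h1).trans (huniq C hC).symm
    exact hX0 (by rwa [add_eq_left] at h2)
  · intro h
    subst h
    refine ⟨((1 : Matrix (Fin ν) (Fin ν) ℝ) ⊗ₖ (Dm r)⁻¹) * B0cal ν r ν * (Dm ν)⁻¹,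
      fun z => st18_part1 ν r ν hq hrq le_rfl z, ?_⟩
    intro Y hY
    have hdiff : ∀ z : ℝ, M0cal ν r ν z
        * (Y - (((1 : Matrix (Fin ν) (Fin ν) ℝ) ⊗ₖ (Dm r)⁻¹) * B0cal ν r ν * (Dm ν)⁻¹)) = 0 := by
      intro z
      rw [Matrix.mul_sub, hY z, st18_part1 ν r ν hq hrq le_rfl z, sub_self]
    exact sub_eq_zero.mp (st18_inj ν r hq hrq _ hdiff)
end
end
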